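/- arXiv:1905.06513 — 5 statements merged into one kernel-verified Lean document; each statement's English description precedes it below -/
import Mathlib

section
/- Let p be an odd prime, r = p^m, q = r². For every l with 0 ≤ l ≤ r − 1 and every d ∈ {0, 1}: if l + d is even and l + dr ≥ 2, then l + dr belongs to Σ(g, q); and if l + d is odd, then l + dr + 1 belongs to Σ(eg, q). In particular, for every even integer n with 2 ≤ n ≤ 2r there exists an MDS self-dual code over F_q of length n. -/
open Finset

/-- Δ_S(a) = ∏_{b ∈ S, b ≠ a} (a − b). -/
def deltaS {F : Type*} [Field F] [DecidableEq F] (S : Finset F) (a : F) : F :=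
  ∏ b ∈ S.erase a, (a - b)

/-- n ∈ Σ(g,q): n is even, n ≥ 2, and there is S ⊆ F_q with |S| = n such that
the quadratic-character values η_q(Δ_S(a)) agree for all a ∈ S
(equivalently, the Δ_S(a) are all squares or all nonsquares). -/
def SigmaG (F : Type*) [Field F] [DecidableEq F] (n : ℕ) : Prop :=
  Even n ∧ 2 ≤ n ∧ ∃ S : Finset F, S.card = n ∧
    ((∀ a ∈ S, IsSquare (deltaS S a)) ∨ (∀ a ∈ S, ¬ IsSquare (deltaS S a)))

/-- n ∈ Σ(eg,q): n is even, n ≥ 2, and there is S ⊆ F_q with |S| = n − 1 such that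
η_q(−Δ_S(a)) = 1, i.e. −Δ_S(a) is a square, for all a ∈ S. -/
def SigmaEG (F : Type*) [Field F] [DecidableEq F] (n : ℕ) : Prop :=
  Even n ∧ 2 ≤ n ∧ ∃ S : Finset F, S.card = n - 1 ∧
    ∀ a ∈ S, IsSquare (-(deltaS S a))


open Polynomial
set_option linter.unusedSectionVars false
set_option linter.unusedVariables false
set_option maxHeartbeats 1000000

section Infra
variable {F : Type*} [Field F] [Fintype F] [DecidableEq F]

lemma deltaS_ne_zero (S : Finset F) (a : F) : deltaS S a ≠ 0 := by
  unfold deltaS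
  rw [Finset.prod_ne_zero_iff]
  intro b hb
  exact sub_ne_zero.mpr (Finset.ne_of_mem_erase hb).symm

-- quadratic facts packaged via card / 2
lemma card_half (r u : ℕ) (hru : r = 2*u+1) (hF : Fintype.card F = r^2) :
    Fintype.card F / 2 = (r-1)*(u+1) ∧ Fintype.card F / 2 = (r+1)*u ∧ Even (Fintype.card F / 2) := by
  subst hru
  have h : Fintype.card F = 4*(u*u) + 4*u + 1 := by rw [hF]; ring
  have h1 : (2*u+1-1)*(u+1) = 2*(u*u) + 2*u := by
    have : 2*u+1-1 = 2*u := by omega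
    rw [this]; ring
  have h2 : (2*u+1+1)*u = 2*(u*u) + 2*u := by ring
  refine ⟨?_, ?_, ?_⟩
  · rw [h, h1]; omega
  · rw [h, h2]; omega
  · rw [h]
    exact ⟨u*u+u, by omega⟩

lemma isSquare_of_pow_r {r u : ℕ} (hru : r = 2*u+1) (hF : Fintype.card F = r^2)
    (hch : ringChar F ≠ 2) {x : F} (hx : x ≠ 0) (h : x ^ r = x) : IsSquare x := by
  rw [FiniteField.isSquare_iff hch hx, (card_half r u hru hF).1]
  have hr1 : x ^ (r - 1) = 1 := by
    have : x ^ (r-1) * x = 1 * x := by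
      rw [one_mul, ← pow_succ]
      have : r - 1 + 1 = r := by omega
      rw [this, h]
    exact mul_right_cancel₀ hx this
  rw [pow_mul, hr1, one_pow]

lemma isSquare_of_pow_r1 {r u : ℕ} (hru : r = 2*u+1) (hF : Fintype.card F = r^2)
    (hch : ringChar F ≠ 2) {x : F} (h : x ^ (r+1) = 1) : IsSquare x := by
  have hx : x ≠ 0 := by
    intro h0; rw [h0, zero_pow (by omega)] at h; exact one_ne_zero h.symm
  rw [FiniteField.isSquare_iff hch hx, (card_half r u hru hF).2.1]
  rw [pow_mul, h, one_pow]

lemma isSquare_neg_one {r u : ℕ} (hru : r = 2*u+1) (hF : Fintype.card F = r^2)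
    (hch : ringChar F ≠ 2) : IsSquare (-1 : F) := by
  rw [FiniteField.isSquare_iff hch (neg_ne_zero.mpr one_ne_zero)]
  exact Even.neg_one_pow (card_half r u hru hF).2.2

lemma isSquare_pow_r1 {r u : ℕ} (hru : r = 2*u+1) (x : F) : IsSquare (x ^ (r+1)) := by
  refine ⟨x^(u+1), ?_⟩
  rw [← pow_add]
  congr 1
  omega

end Infra

section Poly
variable {F : Type*} [Field F] [Fintype F] [DecidableEq F]

lemma big_ne : (X ^ (Fintype.card F) - X : F[X]) ≠ 0 :=
  FiniteField.X_pow_card_sub_X_ne_zero F Fintype.one_lt_card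

lemma big_splits : Splits (X ^ (Fintype.card F) - X : F[X]) := by
  rw [splits_iff_card_roots, FiniteField.roots_X_pow_card_sub_X,
    FiniteField.X_pow_card_sub_X_natDegree_eq F Fintype.one_lt_card]
  exact Finset.card_univ

/-- bundle for monic divisors of X^q - X -/
lemma rootsFinset_spec {f : F[X]} (hmo : f.Monic) (hdvd : f ∣ (X ^ (Fintype.card F) - X)) :
    f.roots.toFinset.card = f.natDegree ∧
    (∀ x : F, f.eval x = ∏ y ∈ f.roots.toFinset, (x - y)) ∧
    (∀ a ∈ f.roots.toFinset, deltaS f.roots.toFinset a = f.derivative.eval a) := by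
  have hle : f.roots ≤ Finset.univ.val := by
    rw [← FiniteField.roots_X_pow_card_sub_X F]
    exact Polynomial.roots.le_of_dvd big_ne hdvd
  have hnodup : f.roots.Nodup := Multiset.nodup_of_le hle Finset.univ.nodup
  have hval : f.roots.toFinset.val = f.roots := by
    rw [Multiset.toFinset_val, Multiset.dedup_eq_self.mpr hnodup]
  have hsplits : Splits f :=
    big_splits.of_dvd big_ne hdvd
  have hcard : Multiset.card f.roots = f.natDegree := splits_iff_card_roots.mp hsplits
  have hfact : f = (f.roots.map fun a => X - C a).prod :=
    hsplits.eq_prod_roots_of_monic hmo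
  have heval : ∀ x : F, f.eval x = ∏ y ∈ f.roots.toFinset, (x - y) := by
    intro x
    conv_lhs => rw [hfact]
    rw [eval_multiset_prod, Multiset.map_map]
    rw [Finset.prod_eq_multiset_prod, hval]
    congr 1
    ext y
    simp
  refine ⟨by rw [Finset.card, hval, hcard], heval, ?_⟩
  intro a ha
  have ha' : a ∈ f.roots := Multiset.mem_toFinset.mp ha
  have hcons : f.roots = a ::ₘ f.roots.erase a := (Multiset.cons_erase ha').symm
  set g : F[X] := ((f.roots.erase a).map fun y => X - C y).prod with hg
  have hfg : f = (X - C a) * g := by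
    conv_lhs => rw [hfact, hcons]
    rw [Multiset.map_cons, Multiset.prod_cons]
  have hder : f.derivative.eval a = g.eval a := by
    rw [hfg, derivative_mul]
    simp
  rw [hder, hg, eval_multiset_prod, Multiset.map_map]
  unfold deltaS
  rw [Finset.prod_eq_multiset_prod, Finset.erase_val, hval]
  congr 1
  ext y
  simp

end Poly

section Concrete
variable {F : Type*} [Field F] [Fintype F] [DecidableEq F]
variable {p m r : ℕ}

lemma cast_r_eq_zero [CharP F p] (hm : 0 < m) (hr : r = p^m) : ((r:ℕ) : F) = 0 := by
  subst hr
  rw [Nat.cast_pow, CharP.cast_eq_zero F p, zero_pow hm.ne']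

lemma frob_add {R : Type*} [CommSemiring R] [CharP R p] [Fact p.Prime]
    (hr : r = p^m) (x y : R) : (x+y)^r = x^r+y^r := by
  subst hr; exact add_pow_char_pow ..

lemma frob_sub {R : Type*} [CommRing R] [CharP R p] [Fact p.Prime]
    (hr : r = p^m) (x y : R) : (x-y)^r = x^r-y^r := by
  subst hr; exact sub_pow_char_pow ..

lemma two_ne_zero'' [CharP F p] [hfp : Fact p.Prime] (hodd : p ≠ 2) : (2:F) ≠ 0 := by
  intro h
  have h2 : ((2:ℕ) : F) = 0 := by exact_mod_cast h
  exact hodd ((Nat.prime_dvd_prime_iff_eq hfp.out Nat.prime_two).mp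
    ((CharP.cast_eq_zero_iff F p 2).mp h2))

lemma ringChar_ne_two [CharP F p] [hfp : Fact p.Prime] (hodd : p ≠ 2) : ringChar F ≠ 2 := by
  rw [ringChar.eq F p]; exact hodd

/-- `X^r - X` divides `X^q - X`. -/
lemma dvdK [CharP F p] [Fact p.Prime] (hm : 0 < m) (hr : r = p^m)
    (hF : Fintype.card F = r^2) :
    (X^r - X : F[X]) ∣ X ^ (Fintype.card F) - X := by
  have hr1 : 1 ≤ r := by subst hr; exact Nat.one_le_pow _ _ (Fact.out (p := p.Prime)).pos
  refine ⟨(X^r - X)^(r-1) + 1, ?_⟩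
  have key : ((X:F[X])^r - X)^r = X^(r*r) - X^r := by
    rw [frob_sub hr, ← pow_mul]
  have : (X^r - X : F[X]) * ((X^r - X)^(r-1) + 1) = (X^r - X)^r + (X^r - X) := by
    rw [mul_add, mul_one, ← pow_succ']
    congr 2
    omega
  rw [this, key, hF, sq]
  ring

lemma monicK (h2 : 2 ≤ r) : ((X:F[X])^r - X).Monic := by
  apply monic_X_pow_sub
  rw [degree_X]
  exact_mod_cast Nat.lt_of_lt_of_le Nat.one_lt_two h2

lemma natDegreeK (h2 : 2 ≤ r) : ((X:F[X])^r - X).natDegree = r := by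
  rw [natDegree_sub_eq_left_of_natDegree_lt, natDegree_X_pow]
  rw [natDegree_X, natDegree_X_pow]
  omega

/-- `X^(r+1) - 1` divides `X^q - X`. -/
lemma dvdC {u : ℕ} (hru : r = 2*u+1) (hF : Fintype.card F = r^2) :
    (X^(r+1) - C 1 : F[X]) ∣ X ^ (Fintype.card F) - X := by
  have h1 : (X^(r+1) - C 1 : F[X]) ∣ X^((r+1)*(r-1)) - 1 := by
    have := sub_dvd_pow_sub_pow ((X:F[X])^(r+1)) 1 (r-1)
    rw [map_one]
    rwa [one_pow, ← pow_mul] at this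
  have h2 : (r+1)*(r-1) + 1 = Fintype.card F := by
    rw [hF, hru]
    have : 2*u+1-1 = 2*u := by omega
    rw [this]; ring
  have h3 : (X : F[X]) ^ (Fintype.card F) - X = X * (X^((r+1)*(r-1)) - 1) := by
    rw [mul_sub, mul_one, ← h2, pow_succ']
  rw [h3]
  exact Dvd.dvd.mul_left h1 X

lemma monicC : ((X:F[X])^(r+1) - C 1).Monic := monic_X_pow_sub_C 1 (by omega)

end Concrete

section Sets
variable {F : Type*} [Field F] [Fintype F] [DecidableEq F]
variable {p m r u : ℕ} [CharP F p] [hfp : Fact p.Prime]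

/-- Subsets of the subfield K give all-square deltas. -/
lemma goodK (hodd : p ≠ 2) (hm : 0 < m) (hr : r = p^m) (hru : r = 2*u+1)
    (hr3 : 3 ≤ r) (hF : Fintype.card F = r^2) {s : ℕ} (hsr : s ≤ r) :
    ∃ S : Finset F, S.card = s ∧ ∀ a ∈ S, IsSquare (deltaS S a) := by
  have hmoK := monicK (F := F) (by omega : 2 ≤ r)
  have spec := rootsFinset_spec hmoK (dvdK hm hr hF)
  set SK := ((X:F[X])^r - X).roots.toFinset with hSK
  have cardK : SK.card = r := by rw [spec.1, natDegreeK (by omega)]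
  have memK : ∀ x : F, x ∈ SK → x^r = x := by
    intro x hx
    have := Multiset.mem_toFinset.mp hx
    rw [mem_roots hmoK.ne_zero] at this
    simpa [IsRoot, sub_eq_zero] using this
  obtain ⟨S, hSsub, hScard⟩ := Finset.exists_subset_card_eq (cardK ▸ hsr)
  refine ⟨S, hScard, ?_⟩
  intro a ha
  apply isSquare_of_pow_r hru hF (ringChar_ne_two hodd) (deltaS_ne_zero S a)
  unfold deltaS
  rw [← Finset.prod_pow]
  apply Finset.prod_congr rfl
  intro b hb
  rw [frob_sub hr, memK a (hSsub ha), memK b (hSsub (Finset.mem_of_mem_erase hb))]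

/-- inverse-closed subsets of K ∖ {1,-1} of any size ≤ r - 2 -/
lemma exists_invclosed (hodd : p ≠ 2) (hm : 0 < m) (hr : r = p^m) (hru : r = 2*u+1)
    (hr3 : 3 ≤ r) (hF : Fintype.card F = r^2) :
    ∀ t, t ≤ r - 2 → ∃ B : Finset F,
      B.card = t ∧ (∀ b ∈ B, b^r = b ∧ b ≠ 1 ∧ b ≠ -1) ∧ (∀ b ∈ B, b⁻¹ ∈ B) := by
  have hmoK := monicK (F := F) (by omega : 2 ≤ r)
  have spec := rootsFinset_spec hmoK (dvdK hm hr hF)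
  set SK := ((X:F[X])^r - X).roots.toFinset with hSK
  have cardK : SK.card = r := by rw [spec.1, natDegreeK (by omega)]
  have memK : ∀ x : F, x ∈ SK ↔ x^r = x := by
    intro x
    rw [Multiset.mem_toFinset, mem_roots hmoK.ne_zero]
    simp [IsRoot, sub_eq_zero]
  have h2z : (2:F) ≠ 0 := two_ne_zero'' hodd
  have h1n : (1:F) ≠ -1 := by
    intro h
    apply h2z
    linear_combination h
  have hodd' : Odd r := ⟨u, by omega⟩
  have hsub11 : ({1, -1} : Finset F) ⊆ SK := by
    intro x hx
    rcases Finset.mem_insert.mp hx with h | h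
    · rw [memK, h, one_pow]
    · rw [Finset.mem_singleton.mp h, memK, hodd'.neg_pow, one_pow]
  have card11 : ({1, -1} : Finset F).card = 2 := by
    rw [Finset.card_insert_of_notMem (by simpa using h1n), Finset.card_singleton]
  set V := SK \ {1, -1} with hV
  have cardV : V.card = r - 2 := by
    rw [hV, Finset.card_sdiff_of_subset hsub11, cardK, card11]
  have memV : ∀ x : F, x ∈ V ↔ (x^r = x ∧ x ≠ 1 ∧ x ≠ -1) := by
    intro x
    rw [hV, Finset.mem_sdiff, memK]
    simp
  have hVinv : ∀ x : F, x ∈ V → x⁻¹ ∈ V := by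
    intro x hx
    rcases eq_or_ne x 0 with rfl | hx0
    · simpa [inv_zero] using hx
    rw [memV] at hx ⊢
    refine ⟨by rw [inv_pow, hx.1], ?_, ?_⟩
    · intro h; exact hx.2.1 (by rw [← inv_inv x, h, inv_one])
    · intro h
      apply hx.2.2
      rw [← inv_inv x, h, inv_neg, inv_one]
  intro t
  induction t using Nat.strong_induction_on with
  | _ t ih =>
    match t with
    | 0 => exact fun _ => ⟨∅, by simp⟩
    | 1 =>
      intro _
      have h0V : (0:F) ∈ V := by
        rw [memV]
        refine ⟨zero_pow (by omega), ?_, ?_⟩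
        · exact fun h => one_ne_zero h.symm
        · intro h; exact one_ne_zero (neg_eq_zero.mp h.symm)
      refine ⟨{0}, rfl, ?_, ?_⟩
      · intro b hb
        rw [Finset.mem_singleton.mp hb]
        exact (memV 0).mp h0V
      · intro b hb
        rw [Finset.mem_singleton.mp hb]
        simp
    | (t+2) =>
      intro hle
      obtain ⟨B, hBcard, hBmem, hBinv⟩ := ih t (by omega) (by omega)
      have hBsubV : B ⊆ V := by
        intro b hb; rw [memV]; exact hBmem b hb
      have hne : ((V \ B).erase 0).Nonempty := by
        rw [← Finset.card_pos]
        have h1 : (V \ B).card ≥ r - 2 - t := by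
          have := Finset.le_card_sdiff B V
          omega
        have := Finset.pred_card_le_card_erase (a := (0:F)) (s := V \ B)
        omega
      obtain ⟨x, hx⟩ := hne
      have hx0 : x ≠ 0 := Finset.ne_of_mem_erase hx
      have hxVB : x ∈ V \ B := Finset.mem_of_mem_erase hx
      have hxV : x ∈ V := (Finset.mem_sdiff.mp hxVB).1
      have hxB : x ∉ B := (Finset.mem_sdiff.mp hxVB).2
      have hxiV : x⁻¹ ∈ V := hVinv x hxV
      have hxiB : x⁻¹ ∉ B := by
        intro h
        exact hxB (by rw [← inv_inv x]; exact hBinv _ h)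
      have hxxi : x ≠ x⁻¹ := by
        intro h
        have : x * x = 1 := by
          have h2 : x * x⁻¹ = 1 := mul_inv_cancel₀ hx0
          rw [← h] at h2
          exact h2
        rcases mul_self_eq_one_iff.mp this with h1 | h1
        · exact ((memV x).mp hxV).2.1 h1
        · exact ((memV x).mp hxV).2.2 h1
      refine ⟨insert x (insert x⁻¹ B), ?_, ?_, ?_⟩
      · rw [Finset.card_insert_of_notMem (by simp [hxB, hxxi]),
          Finset.card_insert_of_notMem hxiB, hBcard]
      · intro b hb
        rcases Finset.mem_insert.mp hb with rfl | hb
        · exact (memV b).mp hxV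
        rcases Finset.mem_insert.mp hb with rfl | hb
        · exact (memV _).mp hxiV
        · exact hBmem b hb
      · intro b hb
        rcases Finset.mem_insert.mp hb with rfl | hb
        · exact Finset.mem_insert_of_mem (Finset.mem_insert_self _ _)
        rcases Finset.mem_insert.mp hb with rfl | hb
        · rw [inv_inv]; exact Finset.mem_insert_self _ _
        · exact Finset.mem_insert_of_mem (Finset.mem_insert_of_mem (hBinv b hb))

end Sets

section Mid
variable {F : Type*} [Field F] [Fintype F] [DecidableEq F]
variable {p m r u : ℕ} [CharP F p] [hfp : Fact p.Prime]

lemma goodMid (hodd : p ≠ 2) (hm : 0 < m) (hr : r = p^m) (hru : r = 2*u+1)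
    (hr3 : 3 ≤ r) (hF : Fintype.card F = r^2) {s : ℕ} (hs1 : r + 1 ≤ s) (hs2 : s ≤ 2*r - 1) :
    ∃ S : Finset F, S.card = s ∧ ∀ a ∈ S, IsSquare (deltaS S a) := by
  have hch2 : ringChar F ≠ 2 := ringChar_ne_two hodd
  have hmoC := monicC (F := F) (r := r)
  have specC := rootsFinset_spec hmoC (dvdC hru hF)
  set SC := ((X:F[X])^(r+1) - C 1).roots.toFinset with hSC
  have cardC : SC.card = r + 1 := by rw [specC.1, natDegree_X_pow_sub_C]
  have memC : ∀ x : F, x ∈ SC ↔ x^(r+1) = 1 := by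
    intro x
    rw [Multiset.mem_toFinset, mem_roots hmoC.ne_zero]
    simp [IsRoot, sub_eq_zero]
  have prodC : ∀ x : F, ∏ y ∈ SC, (x - y) = x^(r+1) - 1 := by
    intro x
    rw [← specC.2.1 x]
    simp
  have deltaC : ∀ y ∈ SC, deltaS SC y = y^r := by
    intro y hy
    rw [specC.2.2 y hy]
    rw [derivative_sub, derivative_C, derivative_X_pow]
    have hcast : ((r+1 : ℕ) : F) = 1 := by
      rw [Nat.cast_add, Nat.cast_one, cast_r_eq_zero hm hr, zero_add]
    simp [hcast]
  -- B
  obtain ⟨B, hBcard, hBmem, hBinv⟩ :=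
    exists_invclosed (F := F) hodd hm hr hru hr3 hF (s - (r+1)) (by omega)
  have hdisj : Disjoint SC B := by
    rw [Finset.disjoint_left]
    intro a haC haB
    have h1 : a^(r+1) = 1 := (memC a).mp haC
    have h2 := hBmem a haB
    rw [pow_succ, h2.1] at h1
    rcases mul_self_eq_one_iff.mp h1 with h | h
    · exact h2.2.1 h
    · exact h2.2.2 h
  set S := SC ∪ B with hS
  have cardS : S.card = s := by
    rw [hS, Finset.card_union_of_disjoint hdisj, cardC, hBcard]
    omega
  refine ⟨S, cardS, ?_⟩
  have hyne0 : ∀ y : F, y ∈ SC → y ≠ 0 := by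
    intro y hy h0
    have := (memC y).mp hy
    rw [h0, zero_pow (by omega)] at this
    exact one_ne_zero this.symm
  have hysq : ∀ y : F, y ∈ SC → IsSquare y := by
    intro y hy
    exact isSquare_of_pow_r1 hru hF hch2 ((memC y).mp hy)
  intro a ha
  rcases Finset.mem_union.mp ha with hy | hb
  -- case a ∈ SC
  · have herase : S.erase a = (SC.erase a) ∪ B := by
      rw [hS, Finset.erase_union_distrib,
        Finset.erase_eq_of_notMem (Finset.disjoint_left.mp hdisj hy)]
    have hdisj2 : Disjoint (SC.erase a) B :=
      Finset.disjoint_of_subset_left (Finset.erase_subset _ _) hdisj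
    have hsplit : deltaS S a = deltaS SC a * ∏ b ∈ B, (a - b) := by
      unfold deltaS
      rw [herase, Finset.prod_union hdisj2]
    rw [hsplit, deltaC a hy]
    have hsqa : IsSquare a := hysq a hy
    apply IsSquare.mul
    · -- a ^ r square
      have : a ^ r = (a^u * a^u) * a := by
        rw [← pow_add, ← pow_succ]
        congr 1
        omega
      rw [this]
      exact IsSquare.mul ⟨a^u, rfl⟩ hsqa
    · -- ∏ b ∈ B, (a - b) square via involution
      have hane : ∀ b ∈ B, a - b ≠ 0 := by
        intro b hb
        exact sub_ne_zero.mpr (fun h => (Finset.disjoint_left.mp hdisj hy) (h ▸ hb))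
      have hprodne : (∏ b ∈ B, (a - b)) ≠ 0 :=
        Finset.prod_ne_zero_iff.mpr hane
      rw [← quadraticChar_one_iff_isSquare hprodne, map_prod]
      have hb0 : ∀ b ∈ B, b ≠ 0 → b⁻¹ ≠ 0 := fun b _ hb => inv_ne_zero hb
      apply Finset.prod_involution (g := fun b _ => b⁻¹)
      · -- main pairing identity
        intro b hb
        rcases eq_or_ne b 0 with rfl | hb0'
        · rw [inv_zero, ← map_mul]
          rw [sub_zero, quadraticChar_one_iff_isSquare (by
            exact mul_ne_zero (hyne0 a hy) (hyne0 a hy))]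
          exact IsSquare.mul (hysq a hy) (hysq a hy)
        · rw [← map_mul]
          have hbinB : b⁻¹ ∈ B := hBinv b hb
          have hne1 : a - b ≠ 0 := hane b hb
          have hne2 : a - b⁻¹ ≠ 0 := hane _ hbinB
          rw [quadraticChar_one_iff_isSquare (mul_ne_zero hne1 hne2)]
          -- identity : (a-b)(a-b⁻¹) = (-1) * a * b⁻¹ * ((a-b)^(u+1))^2
          have har : a * a^r = 1 := by
            have := (memC a).mp hy
            rw [← this, ← pow_succ']
          have hbr : b^r = b := (hBmem b hb).1
          have key : (a-b) * (a-b⁻¹) = (-1) * a * b⁻¹ * ((a-b)^(u+1))^2 := by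
            have hpow : ((a-b)^(u+1))^2 = (a-b)^r * (a-b) := by
              rw [← pow_mul, ← pow_succ]
              congr 1
              omega
            rw [hpow, frob_sub hr, hbr]
            have har' : a^r = a⁻¹ := eq_inv_of_mul_eq_one_left (by linear_combination har)
            rw [har']
            field_simp [hyne0 a hy]
            ring
          rw [key]
          apply IsSquare.mul
          apply IsSquare.mul
          apply IsSquare.mul
          · exact isSquare_neg_one hru hF hch2
          · exact hysq a hy
          · apply isSquare_of_pow_r hru hF hch2 (inv_ne_zero hb0')
            rw [inv_pow, hbr]
          · exact ⟨(a-b)^(u+1), by ring⟩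
      · -- fixed points
        intro b hb hχ h
        apply hχ
        rcases eq_or_ne b 0 with rfl | hb0'
        · rw [sub_zero]
          rw [quadraticChar_one_iff_isSquare (hyne0 a hy)]
          exact hysq a hy
        · exfalso
          have : b * b = 1 := by
            have h2 : b * b⁻¹ = 1 := mul_inv_cancel₀ hb0'
            rw [h] at h2
            exact h2
          rcases mul_self_eq_one_iff.mp this with h1 | h1
          · exact (hBmem b hb).2.1 h1
          · exact (hBmem b hb).2.2 h1
      · exact fun b hb => inv_inv b
      · exact fun b hb => hBinv b hb
  -- case a ∈ B
  · have herase : S.erase a = SC ∪ (B.erase a) := by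
      rw [hS, Finset.erase_union_distrib,
        Finset.erase_eq_of_notMem (Finset.disjoint_right.mp hdisj hb)]
    have hdisj2 : Disjoint SC (B.erase a) :=
      Finset.disjoint_of_subset_right (Finset.erase_subset _ _) hdisj
    have hsplit : deltaS S a = (∏ y ∈ SC, (a - y)) * ∏ b ∈ B.erase a, (a - b) := by
      unfold deltaS
      rw [herase, Finset.prod_union hdisj2]
    rw [hsplit, prodC a]
    have har : a^r = a := (hBmem a hb).1
    apply IsSquare.mul
    · -- a^(r+1) - 1 = a*a - 1 ∈ K^*
      have h1 : a^(r+1) - 1 = a*a - 1 := by rw [pow_succ, har]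
      rw [h1]
      apply isSquare_of_pow_r hru hF hch2
      · intro h
        rcases mul_self_eq_one_iff.mp (by linear_combination h) with h1' | h1'
        · exact (hBmem a hb).2.1 h1'
        · exact (hBmem a hb).2.2 h1'
      · rw [frob_sub hr, one_pow, mul_pow, har]
    · -- K-internal product
      apply isSquare_of_pow_r hru hF hch2
      · apply Finset.prod_ne_zero_iff.mpr
        intro b hbe
        exact sub_ne_zero.mpr (Finset.ne_of_mem_erase hbe).symm
      · rw [← Finset.prod_pow]
        apply Finset.prod_congr rfl
        intro b hbe
        rw [frob_sub hr, har, (hBmem b (Finset.mem_of_mem_erase hbe)).1]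

end Mid

section TwoR
variable {F : Type*} [Field F] [Fintype F] [DecidableEq F]
variable {p m r u : ℕ} [CharP F p] [hfp : Fact p.Prime]

lemma good2r (hodd : p ≠ 2) (hm : 0 < m) (hr : r = p^m) (hru : r = 2*u+1)
    (hr3 : 3 ≤ r) (hF : Fintype.card F = r^2) :
    ∃ S : Finset F, S.card = 2*r ∧ ∀ a ∈ S, IsSquare (deltaS S a) := by
  have hch2 : ringChar F ≠ 2 := ringChar_ne_two hodd
  have h2z : (2:F) ≠ 0 := two_ne_zero'' hodd
  set w : F := (2:F)⁻¹ with hw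
  have hwz : w ≠ 0 := inv_ne_zero h2z
  have h2w : 2 * w = 1 := mul_inv_cancel₀ h2z
  have h2r : (2:F)^r = 2 := by
    have : ((1:F)+1)^r = 1^r + 1^r := frob_add hr 1 1
    simpa [one_add_one_eq_two] using this
  have hwr : w^r = w := by
    rw [hw, inv_pow, h2r]
  set g1 : F[X] := X^r + (X - C w) with hg1
  set g2 : F[X] := X^r + (X + C w) with hg2
  have hmo1 : g1.Monic := (monic_X_pow r).add_of_left (by
    rw [degree_X_sub_C, degree_X_pow]
    exact_mod_cast (by omega : 1 < r))
  have hmo2 : g2.Monic := (monic_X_pow r).add_of_left (by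
    rw [degree_X_add_C, degree_X_pow]
    exact_mod_cast (by omega : 1 < r))
  have hdeg1 : g1.natDegree = r := by
    apply natDegree_eq_of_degree_eq_some
    rw [hg1]
    rw [degree_add_eq_left_of_degree_lt, degree_X_pow]
    rw [degree_X_sub_C, degree_X_pow]
    exact_mod_cast (by omega : 1 < r)
  have hdeg2 : g2.natDegree = r := by
    apply natDegree_eq_of_degree_eq_some
    rw [hg2]
    rw [degree_add_eq_left_of_degree_lt, degree_X_pow]
    rw [degree_X_add_C, degree_X_pow]
    exact_mod_cast (by omega : 1 < r)
  -- divisibility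
  have hroot1 : ((X:F[X])^r - X).IsRoot w := by
    simp [IsRoot, hwr]
  obtain ⟨t, ht⟩ := (dvd_iff_isRoot).mpr hroot1
  have hroott : t.IsRoot (-w) := by
    have h0 : ((X:F[X])^r - X).eval (-w) = 0 := by
      have hodd' : Odd r := ⟨u, by omega⟩
      simp [hodd'.neg_pow, hwr]
    rw [ht] at h0
    simp only [eval_mul, eval_sub, eval_X, eval_C] at h0
    have hne : -w - w ≠ 0 := by
      intro h
      apply hwz
      have : -(2*w) = 0 := by linear_combination h
      rw [h2w] at this
      exact absurd this (by norm_num)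
    rcases mul_eq_zero.mp h0 with h | h
    · exact absurd h hne
    · exact h
  obtain ⟨t2, ht2⟩ := (dvd_iff_isRoot).mpr hroott
  have hKfact : (X:F[X])^r - X = (X - C w) * (X - C (-w)) * t2 := by
    rw [ht, ht2]; ring
  set A : F[X] := X^r + X with hA
  have hcompA : ((X:F[X])^r - X).comp A = X^(Fintype.card F) - X := by
    rw [sub_comp, X_pow_comp, X_comp]
    have : A^r = (X^r)^r + X^r := by
      rw [hA]; exact frob_add hr _ _
    rw [this, ← pow_mul, hF, sq]
    ring
  have hf3 : ((X - C w) * (X - C (-w))).comp A = g1 * g2 := by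
    rw [mul_comp, sub_comp, sub_comp, X_comp, C_comp, C_comp, map_neg]
    rw [hg1, hg2, hA]
    ring
  have hdvd : g1 * g2 ∣ X^(Fintype.card F) - X := by
    rw [← hf3, ← hcompA]
    exact ⟨t2.comp A, by rw [hKfact, mul_comp]⟩
  have hmo3 : (g1*g2).Monic := hmo1.mul hmo2
  have spec3 := rootsFinset_spec hmo3 hdvd
  set S3 := (g1*g2).roots.toFinset with hS3
  have cardS3 : S3.card = 2*r := by
    rw [spec3.1, hmo1.natDegree_mul hmo2, hdeg1, hdeg2]
    omega
  refine ⟨S3, cardS3, ?_⟩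
  intro a ha
  have haroot : g1.eval a * g2.eval a = 0 := by
    have := Multiset.mem_toFinset.mp ha
    rw [mem_roots hmo3.ne_zero] at this
    simpa [IsRoot] using this
  have hrcast : ((r:ℕ) : F) = 0 := cast_r_eq_zero hm hr
  have hg1' : g1.derivative = 1 := by
    rw [hg1]
    rw [derivative_add, derivative_X_pow, derivative_sub, derivative_X, derivative_C]
    simp [hrcast]
  have hg2' : g2.derivative = 1 := by
    rw [hg2]
    rw [derivative_add, derivative_X_pow, derivative_add, derivative_X, derivative_C]
    simp [hrcast]
  have hD : deltaS S3 a = g2.eval a + g1.eval a := by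
    rw [spec3.2.2 a ha, derivative_mul, hg1', hg2']
    simp [mul_comm]
  have hdiff : g1.eval a - g2.eval a = -1 := by
    rw [hg1, hg2]
    simp only [eval_add, eval_sub, eval_X, eval_C, eval_pow]
    linear_combination -h2w
  have hDsq : (deltaS S3 a) * (deltaS S3 a) = 1 := by
    rw [hD]
    have : (g2.eval a + g1.eval a) * (g2.eval a + g1.eval a)
        = (g1.eval a - g2.eval a)^2 + 4*(g1.eval a * g2.eval a) := by ring
    rw [this, hdiff, haroot]
    ring
  rcases mul_self_eq_one_iff.mp hDsq with h | h
  · rw [h]; exact IsSquare.one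
  · rw [h]; exact isSquare_neg_one hru hF hch2

/-- Master: good sets of any size `1 ≤ s ≤ 2r`. -/
lemma goodset_exists (hodd : p ≠ 2) (hm : 0 < m) (hr : r = p^m) (hru : r = 2*u+1)
    (hr3 : 3 ≤ r) (hF : Fintype.card F = r^2) {s : ℕ} (hs1 : 1 ≤ s) (hs2 : s ≤ 2*r) :
    ∃ S : Finset F, S.card = s ∧ ∀ a ∈ S, IsSquare (deltaS S a) := by
  rcases le_or_gt s r with h | h
  · exact goodK hodd hm hr hru hr3 hF h
  rcases eq_or_lt_of_le hs2 with h2 | h2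
  · exact h2 ▸ good2r hodd hm hr hru hr3 hF
  · exact goodMid hodd hm hr hru hr3 hF (by omega) (by omega)

end TwoR

section GRS
variable {F : Type*} [Field F] [Fintype F] [DecidableEq F]

lemma key_sum {n : ℕ} (hn : 2 ≤ n) (S : Finset F) (hS : S.card = n)
    (h : F[X]) (hdeg : h.degree < ((n - 1 : ℕ) : WithBot ℕ)) :
    ∑ a ∈ S, (deltaS S a)⁻¹ * h.eval a = 0 := by
  classical
  set Q : F[X] := ∑ a ∈ S, C (h.eval a * (deltaS S a)⁻¹) * ∏ b ∈ S.erase a, (X - C b) with hQ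
  have hPmonic : ∀ a ∈ S, (∏ b ∈ S.erase a, (X - C b : F[X])).Monic :=
    fun a _ => monic_prod_of_monic _ _ (fun b _ => monic_X_sub_C b)
  have hPdeg : ∀ a ∈ S, (∏ b ∈ S.erase a, (X - C b : F[X])).natDegree = n - 1 := by
    intro a ha
    rw [natDegree_prod_of_monic _ _ (fun b _ => monic_X_sub_C b)]
    simp only [natDegree_X_sub_C]
    rw [Finset.sum_const, Finset.card_erase_of_mem ha, hS, smul_eq_mul, mul_one]
  have hQeval : ∀ x ∈ S, Q.eval x = h.eval x := by
    intro x hx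
    rw [hQ, eval_finset_sum]
    rw [Finset.sum_eq_single x]
    · rw [eval_mul, eval_C, eval_prod]
      have : ∏ b ∈ S.erase x, (x - b) = deltaS S x := by
        unfold deltaS
        apply Finset.prod_congr rfl
        intros; rfl
      simp only [eval_sub, eval_X, eval_C]
      rw [this, mul_assoc, inv_mul_cancel₀ (deltaS_ne_zero S x), mul_one]
    · intro a haS hax
      rw [eval_mul, eval_prod]
      have hxe : x ∈ S.erase a := Finset.mem_erase.mpr ⟨fun hh => hax hh.symm, hx⟩
      rw [Finset.prod_eq_zero hxe (by simp), mul_zero]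
    · intro hxS; exact absurd hx hxS
  have hQdeg : Q.natDegree ≤ n - 1 := by
    apply natDegree_sum_le_of_forall_le
    intro a ha
    exact (natDegree_C_mul_le _ _).trans (le_of_eq (hPdeg a ha))
  have hhdeg : h.natDegree ≤ n - 1 := by
    rcases eq_or_ne h 0 with rfl | hh
    · simp
    · exact le_of_lt ((natDegree_lt_iff_degree_lt hh).mpr hdeg)
  have hQh : Q = h := by
    rw [← sub_eq_zero]
    apply eq_zero_of_natDegree_lt_card_of_eval_eq_zero' _ S
    · intro x hx
      rw [eval_sub, hQeval x hx, sub_self]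
    · calc (Q - h).natDegree ≤ max Q.natDegree h.natDegree := natDegree_sub_le _ _
        _ ≤ n - 1 := max_le hQdeg hhdeg
        _ < S.card := by omega
  have hcoeff := congrArg (fun q : F[X] => q.coeff (n-1)) hQh
  simp only [hQ, finset_sum_coeff, coeff_C_mul] at hcoeff
  have hPcoeff : ∀ a ∈ S, (∏ b ∈ S.erase a, (X - C b : F[X])).coeff (n-1) = 1 := by
    intro a ha
    have := (hPmonic a ha).coeff_natDegree
    rwa [hPdeg a ha] at this
  rw [Finset.sum_congr rfl (fun a ha => by rw [hPcoeff a ha, mul_one])] at hcoeff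
  rw [coeff_eq_zero_of_degree_lt hdeg] at hcoeff
  rw [← hcoeff]
  apply Finset.sum_congr rfl
  intros; ring

end GRS

section Code
variable {F : Type*} [Field F] [Fintype F] [DecidableEq F]

lemma grs_code {n k : ℕ} (hn : n = 2*k) (hk : 1 ≤ k) (S : Finset F) (hScard : S.card = n)
    (hsq : ∀ a ∈ S, IsSquare (deltaS S a)) :
    ∃ C : Submodule F (Fin n → F),
      ((C : Set (Fin n → F)) = {v | ∀ c ∈ C, ∑ i, v i * c i = 0}) ∧
      sInf {w : ℕ | ∃ c ∈ C, c ≠ 0 ∧ hammingNorm c = w} = n - n / 2 + 1 := by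
  classical
  have hn2 : 2 ≤ n := by omega
  -- square roots of inverted deltas
  have hsqinv : ∀ a : F, a ∈ S → ∃ t : F, (deltaS S a)⁻¹ = t * t ∧ t ≠ 0 := by
    intro a ha
    obtain ⟨t, ht⟩ := hsq a ha
    refine ⟨t⁻¹, by rw [ht]; rw [mul_inv], ?_⟩
    intro h0
    apply deltaS_ne_zero S a
    rw [ht, ← inv_inv t, h0]
    simp
  choose! v hv hvne using hsqinv
  -- enumeration of S
  have hcardS : Fintype.card (↥S) = n := by rw [Fintype.card_coe, hScard]
  set e : ↥S ≃ Fin n := Fintype.equivFinOfCardEq hcardS with he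
  set σ : Fin n → F := fun i => ((e.symm i : ↥S) : F) with hσ
  have hσS : ∀ i, σ i ∈ S := fun i => (e.symm i).2
  have hσinj : Function.Injective σ :=
    Subtype.val_injective.comp e.symm.injective
  have hσsum : ∀ g : F → F, ∑ i, g (σ i) = ∑ a ∈ S, g a := by
    intro g
    rw [← Finset.sum_coe_sort S g]
    exact Equiv.sum_comp e.symm (fun x => g (x : F))
  have hσsurj : ∀ a ∈ S, ∃ i, σ i = a := by
    intro a ha
    exact ⟨e ⟨a, ha⟩, by rw [hσ]; simp⟩
  -- evaluation map
  set ev : F[X] →ₗ[F] (Fin n → F) :=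
    LinearMap.pi (fun i => v (σ i) • Polynomial.leval (σ i)) with hev
  have hevapp : ∀ (f : F[X]) (i : Fin n), ev f i = v (σ i) * f.eval (σ i) := by
    intro f i
    rw [hev]
    simp [Polynomial.leval]
  set W : Submodule F F[X] := Polynomial.degreeLT F k with hW
  set CODE : Submodule F (Fin n → F) := Submodule.map ev W with hCODE
  have hkn : k < n := by omega
  -- injectivity
  have hinj : ∀ f ∈ W, ev f = 0 → f = 0 := by
    intro f hf h0
    apply Polynomial.eq_zero_of_natDegree_lt_card_of_eval_eq_zero' f S
    · intro a ha
      obtain ⟨i, rfl⟩ := hσsurj a ha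
      have := congrFun h0 i
      rw [hevapp] at this
      rcases mul_eq_zero.mp this with h | h
      · exact absurd h (hvne _ (hσS i))
      · exact h
    · rcases eq_or_ne f 0 with rfl | hf0
      · simpa [hScard] using by omega
      · have : f.natDegree < k := (natDegree_lt_iff_degree_lt hf0).mpr (mem_degreeLT.mp hf)
        omega
  -- finrank
  have hrankW : Module.finrank F W = k := by
    rw [hW]
    rw [(Polynomial.degreeLTEquiv F k).finrank_eq]
    simp [Module.finrank_fintype_fun_eq_card]
  have hCODErange : CODE = LinearMap.range (ev.comp W.subtype) := by
    rw [hCODE, LinearMap.range_comp, Submodule.range_subtype]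
  have hrankCODE : Module.finrank F CODE = k := by
    rw [hCODErange, LinearMap.finrank_range_of_inj, hrankW]
    intro f g hfg
    have h0 : ev ((f : F[X]) - g) = 0 := by
      rw [map_sub, sub_eq_zero]
      exact hfg
    have := hinj ((f:F[X]) - g) (Submodule.sub_mem _ f.2 g.2) h0
    exact Subtype.ext (sub_eq_zero.mp this)
  -- bilinear form
  set Bf : LinearMap.BilinForm F (Fin n → F) :=
    LinearMap.mk₂ F (fun x y => ∑ i, x i * y i)
      (fun x x' y => by simp [add_mul, Finset.sum_add_distrib])
      (fun c x y => by simp [Finset.mul_sum, mul_assoc])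
      (fun x y y' => by simp [mul_add, Finset.sum_add_distrib])
      (fun c x y => by
        simp only [Pi.smul_apply, smul_eq_mul, Finset.mul_sum]
        apply Finset.sum_congr rfl
        intros; ring) with hBf
  have hBfapp : ∀ x y : Fin n → F, Bf x y = ∑ i, x i * y i := fun x y => rfl
  have hBfrefl : Bf.IsRefl := by
    intro x y hxy
    rw [hBfapp] at hxy ⊢
    rw [← hxy]
    apply Finset.sum_congr rfl
    intros; ring
  have hBfnd : Bf.Nondegenerate := by
    constructor
    · intro x hx
      funext i
      have := hx (Pi.single i 1)
      rw [hBfapp] at this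
      simpa [Pi.single_apply, Finset.sum_ite_eq'] using this
    · intro x hx
      funext i
      have := hx (Pi.single i 1)
      rw [hBfapp] at this
      simpa [Pi.single_apply, Finset.sum_ite_eq] using this
  -- self-orthogonality
  have horth : ∀ c ∈ CODE, ∀ c' ∈ CODE, Bf c c' = 0 := by
    rintro c hc c' hc'
    obtain ⟨f, hf, rfl⟩ := Submodule.mem_map.mp hc
    obtain ⟨g, hg, rfl⟩ := Submodule.mem_map.mp hc'
    rw [hBfapp]
    have hterm : ∀ i, ev f i * ev g i = (deltaS S (σ i))⁻¹ * (f*g).eval (σ i) := by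
      intro i
      rw [hevapp, hevapp, eval_mul, hv _ (hσS i)]
      ring
    rw [Finset.sum_congr rfl (fun i _ => hterm i)]
    rw [hσsum (fun a => (deltaS S a)⁻¹ * (f*g).eval a)]
    apply key_sum hn2 S hScard
    -- degree bound
    rcases eq_or_ne f 0 with rfl | hf0
    · rw [zero_mul, degree_zero]
      exact WithBot.bot_lt_coe _
    rcases eq_or_ne g 0 with rfl | hg0
    · rw [mul_zero, degree_zero]
      exact WithBot.bot_lt_coe _
    have hdf : f.natDegree ≤ k - 1 := by
      have := (natDegree_lt_iff_degree_lt hf0).mpr (mem_degreeLT.mp hf)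
      omega
    have hdg : g.natDegree ≤ k - 1 := by
      have := (natDegree_lt_iff_degree_lt hg0).mpr (mem_degreeLT.mp hg)
      omega
    have hfg0 : f * g ≠ 0 := mul_ne_zero hf0 hg0
    rw [← natDegree_lt_iff_degree_lt hfg0]
    have := natDegree_mul_le (p := f) (q := g)
    omega
  -- duality
  have hle : CODE ≤ Bf.orthogonal CODE := by
    intro c hc
    rw [LinearMap.BilinForm.mem_orthogonal_iff]
    intro y hy
    exact horth y hy c hc
  have hrankV : Module.finrank F (Fin n → F) = n := by
    simp [Module.finrank_fintype_fun_eq_card]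
  have hrankOrth : Module.finrank F (Bf.orthogonal CODE) = k := by
    rw [LinearMap.BilinForm.finrank_orthogonal hBfnd, hrankV, hrankCODE]
    omega
  have hdual : CODE = Bf.orthogonal CODE := by
    apply Submodule.eq_of_le_of_finrank_le hle
    rw [hrankOrth, hrankCODE]
  refine ⟨CODE, ?_, ?_⟩
  · -- set equality
    ext x
    constructor
    · intro hx c hc
      have hx' : x ∈ Bf.orthogonal CODE := hdual ▸ hx
      have := (LinearMap.BilinForm.mem_orthogonal_iff.mp hx') c hc
      rw [hBfapp] at this
      rw [← this]
      apply Finset.sum_congr rfl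
      intros; ring
    · intro hx
      rw [SetLike.mem_coe, hdual, LinearMap.BilinForm.mem_orthogonal_iff]
      intro y hy
      rw [hBfapp]
      rw [← hx y hy]
      apply Finset.sum_congr rfl
      intros; ring
  · -- minimum distance
    have hnormeq : ∀ c : Fin n → F,
        hammingNorm c = #(Finset.univ.filter (fun i => c i ≠ 0)) := fun c => rfl
    have hlower : ∀ c ∈ CODE, c ≠ 0 → k + 1 ≤ hammingNorm c := by
      intro c hc hc0
      obtain ⟨f, hf, rfl⟩ := Submodule.mem_map.mp hc
      have hf0 : f ≠ 0 := by
        rintro rfl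
        exact hc0 (map_zero ev)
      have hfdeg : f.natDegree ≤ k - 1 := by
        have := (natDegree_lt_iff_degree_lt hf0).mpr (mem_degreeLT.mp hf)
        omega
      have hZcard : #(Finset.univ.filter (fun i => ev f i = 0)) ≤ k - 1 := by
        have hmaps : ∀ i ∈ Finset.univ.filter (fun i => ev f i = 0), σ i ∈ f.roots.toFinset := by
          intro i hi
          rw [Multiset.mem_toFinset, mem_roots hf0]
          have := (Finset.mem_filter.mp hi).2
          rw [hevapp] at this
          rcases mul_eq_zero.mp this with h | h
          · exact absurd h (hvne _ (hσS i))
          · exact h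
        calc #(Finset.univ.filter (fun i => ev f i = 0)) ≤ f.roots.toFinset.card :=
              Finset.card_le_card_of_injOn σ hmaps (hσinj.injOn)
          _ ≤ Multiset.card f.roots := Multiset.toFinset_card_le _
          _ ≤ f.natDegree := Polynomial.card_roots' f
          _ ≤ k - 1 := hfdeg
      have hsplit := Finset.card_filter_add_card_filter_not
        (s := (Finset.univ : Finset (Fin n))) (p := fun i => ev f i = 0)
      have hcardfin : #(Finset.univ : Finset (Fin n)) = n := by simp
      rw [hnormeq, show (Finset.univ.filter (fun i => ev f i ≠ 0)) =
        (Finset.univ.filter (fun i => ¬ ev f i = 0)) from rfl]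
      omega
    -- existence of weight k+1 codeword
    obtain ⟨S₀, hS₀sub, hS₀card⟩ :=
      Finset.exists_subset_card_eq (show k - 1 ≤ S.card by omega)
    set f₀ : F[X] := ∏ s ∈ S₀, (X - C s) with hf₀
    have hf₀monic : f₀.Monic := monic_prod_of_monic _ _ (fun b _ => monic_X_sub_C b)
    have hf₀deg : f₀.natDegree = k - 1 := by
      rw [hf₀, natDegree_prod_of_monic _ _ (fun b _ => monic_X_sub_C b)]
      simp [hS₀card]
    have hf₀W : f₀ ∈ W := by
      rw [hW, mem_degreeLT, degree_eq_natDegree hf₀monic.ne_zero, hf₀deg]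
      exact_mod_cast (by omega : k - 1 < k)
    have hc₀mem : ev f₀ ∈ CODE := Submodule.mem_map.mpr ⟨f₀, hf₀W, rfl⟩
    have hc₀zero : ∀ i, ev f₀ i = 0 ↔ σ i ∈ S₀ := by
      intro i
      rw [hevapp]
      constructor
      · intro h
        rcases mul_eq_zero.mp h with h | h
        · exact absurd h (hvne _ (hσS i))
        · rw [hf₀, eval_prod] at h
          obtain ⟨s, hs, hs0⟩ := Finset.prod_eq_zero_iff.mp h
          simp only [eval_sub, eval_X, eval_C] at hs0
          rwa [sub_eq_zero.mp hs0]
      · intro h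
        rw [hf₀, eval_prod]
        rw [Finset.prod_eq_zero h (by simp)]
        ring
    have hc₀count : #(Finset.univ.filter (fun i => ev f₀ i = 0)) = k - 1 := by
      rw [← hS₀card]
      apply Finset.card_bij (fun i _ => σ i)
      · intro i hi
        exact (hc₀zero i).mp (Finset.mem_filter.mp hi).2
      · intro i hi j hj hij
        exact hσinj hij
      · intro a ha
        obtain ⟨i, rfl⟩ := hσsurj a (hS₀sub ha)
        exact ⟨i, Finset.mem_filter.mpr ⟨Finset.mem_univ i, (hc₀zero i).mpr ha⟩, rfl⟩
    have hc₀norm : hammingNorm (ev f₀) = k + 1 := by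
      rw [hnormeq]
      have hsplit := Finset.card_filter_add_card_filter_not
        (s := (Finset.univ : Finset (Fin n))) (p := fun i => ev f₀ i = 0)
      have hcardfin : #(Finset.univ : Finset (Fin n)) = n := by simp
      rw [show (Finset.univ.filter (fun i => ev f₀ i ≠ 0)) =
        (Finset.univ.filter (fun i => ¬ ev f₀ i = 0)) from rfl]
      omega
    have hc₀ne : ev f₀ ≠ 0 := by
      intro h
      have := hammingNorm_eq_zero.mpr h
      rw [hc₀norm] at this
      omega
    have hmem : k + 1 ∈ {w : ℕ | ∃ c ∈ CODE, c ≠ 0 ∧ hammingNorm c = w} :=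
      ⟨ev f₀, hc₀mem, hc₀ne, hc₀norm⟩
    have : sInf {w : ℕ | ∃ c ∈ CODE, c ≠ 0 ∧ hammingNorm c = w} = k + 1 := by
      apply le_antisymm (Nat.sInf_le hmem)
      apply le_csInf ⟨_, hmem⟩
      rintro w ⟨c, hc, hc0, rfl⟩
      exact hlower c hc hc0
    rw [this]
    omega

end Code

section MainGlue

theorem stmt_14' (p m : ℕ) (hp : p.Prime) (hodd : p ≠ 2) (hm : 0 < m)
    (r : ℕ) (hr : r = p ^ m)
    (F : Type*) [Field F] [Fintype F] [DecidableEq F] (hF : Fintype.card F = r ^ 2) :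
    (∀ l d : ℕ, l ≤ r - 1 → d ≤ 1 →
      (Even (l + d) → 2 ≤ l + d * r → SigmaG F (l + d * r)) ∧
      (Odd (l + d) → SigmaEG F (l + d * r + 1))) ∧
    (∀ n : ℕ, Even n → 2 ≤ n → n ≤ 2 * r →
      ∃ C : Submodule F (Fin n → F),
        ((C : Set (Fin n → F)) = {v | ∀ c ∈ C, ∑ i, v i * c i = 0}) ∧
        sInf {w : ℕ | ∃ c ∈ C, c ≠ 0 ∧ hammingNorm c = w} = n - n / 2 + 1) := by
  haveI hfp : Fact p.Prime := ⟨hp⟩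
  haveI hchar : CharP F p := by
    obtain ⟨n, hn1, hn2⟩ := FiniteField.card F (ringChar F)
    have hpow : ringChar F ^ (n : ℕ) = p ^ (2*m) := by
      rw [← hn2, hF, hr, ← pow_mul, mul_comm m 2]
    have hdvd : ringChar F ∣ p ^ (2*m) := by
      rw [← hpow]
      exact dvd_pow_self _ (by positivity)
    have : ringChar F = p :=
      (Nat.prime_dvd_prime_iff_eq hn1 hp).mp (hn1.dvd_of_dvd_pow hdvd)
    exact ringChar.of_eq this
  have hrodd : Odd r := by
    rw [hr]
    exact (hp.odd_of_ne_two hodd).pow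
  obtain ⟨u, hru⟩ : ∃ u, r = 2*u+1 := by
    obtain ⟨u, hu⟩ := hrodd
    exact ⟨u, hu⟩
  have hr3 : 3 ≤ r := by
    have h3p : 3 ≤ p := by
      have := hp.two_le
      omega
    have : p ≤ p ^ m := Nat.le_self_pow hm.ne' p
    omega
  have hch2 : ringChar F ≠ 2 := ringChar_ne_two hodd
  have mainG : ∀ n', Even n' → 2 ≤ n' → n' ≤ 2*r → SigmaG F n' := by
    intro n' he h2 hle
    obtain ⟨S, hc, hsq⟩ := goodset_exists hodd hm hr hru hr3 hF (by omega) hle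
    exact ⟨he, h2, S, hc, Or.inl hsq⟩
  have mainEG : ∀ n', Even n' → 2 ≤ n' → n' - 1 ≤ 2*r - 1 → SigmaEG F n' := by
    intro n' he h2 hle
    obtain ⟨S, hc, hsq⟩ :=
      goodset_exists hodd hm hr hru hr3 hF (s := n' - 1) (by omega) (by omega)
    refine ⟨he, h2, S, hc, fun a ha => ?_⟩
    rw [show -(deltaS S a) = (-1) * deltaS S a by ring]
    exact IsSquare.mul (isSquare_neg_one hru hF hch2) (hsq a ha)
  constructor
  · intro l d hl hd
    interval_cases d
    · constructor
      · intro heven h2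
        apply mainG
        · simpa using heven
        · omega
        · omega
      · intro hodd'
        simp only [Nat.mul_zero, Nat.zero_mul, Nat.add_zero] at hodd' ⊢
        have hl1 : 1 ≤ l := by
          rcases hodd' with ⟨j, hj⟩
          omega
        apply mainEG
        · exact hodd'.add_one
        · omega
        · omega
    · constructor
      · intro heven h2
        have hlodd : Odd l := by
          rcases Nat.even_add_one.mp (by simpa using heven) with h
          exact Nat.not_even_iff_odd.mp h
        apply mainG
        · simpa using hlodd.add_odd hrodd
        · omega
        · omega
      · intro hodd'
        have hleven : Even l :=
          Nat.not_odd_iff_even.mp (Nat.odd_add_one.mp (by simpa using hodd'))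
        apply mainEG
        · have : Even (r + 1) := by
            rcases hrodd with ⟨j, hj⟩
            exact ⟨j+1, by omega⟩
          have := hleven.add this
          simpa [one_mul, Nat.add_assoc] using this
        · omega
        · omega
  · intro n he h2 hle
    obtain ⟨k, hk⟩ := he
    have hn2k : n = 2*k := by omega
    obtain ⟨S, hc, hsq⟩ :=
      goodset_exists hodd hm hr hru hr3 hF (s := n) (by omega) hle
    exact grs_code hn2k (by omega) S hc hsq

end MainGlue

theorem stmt_14 (p m : ℕ) (hp : p.Prime) (hodd : p ≠ 2) (hm : 0 < m)
    (r : ℕ) (hr : r = p ^ m)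
    (F : Type*) [Field F] [Fintype F] [DecidableEq F] (hF : Fintype.card F = r ^ 2) :
    (∀ l d : ℕ, l ≤ r - 1 → d ≤ 1 →
      (Even (l + d) → 2 ≤ l + d * r → SigmaG F (l + d * r)) ∧
      (Odd (l + d) → SigmaEG F (l + d * r + 1))) ∧
    -- in particular: every even n with 2 ≤ n ≤ 2r is the length of an MDS self-dual code over F_q
    (∀ n : ℕ, Even n → 2 ≤ n → n ≤ 2 * r →
      ∃ C : Submodule F (Fin n → F),
        ((C : Set (Fin n → F)) = {v | ∀ c ∈ C, ∑ i, v i * c i = 0}) ∧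
        sInf {w : ℕ | ∃ c ∈ C, c ≠ 0 ∧ hammingNorm c = w} = n - n / 2 + 1) :=
  stmt_14' p m hp hodd hm r hr F hF
end

section
/- Let p be an odd prime, q = p^m, and Q = q^l with l ≥ 1. If n is an even integer with 2 ≤ n ≤ q − 1 and n belongs to Σ(g, q), then n·q^{l−1} belongs to Σ(g, Q). -/
open Finset

section Helpers
open Polynomial

lemma my_ringChar_eq (p n : ℕ) (hp : p.Prime) (hn : 0 < n)
    (K : Type*) [Field K] [Fintype K] (hK : Fintype.card K = p ^ n) : ringChar K = p := by
  haveI : CharP K (ringChar K) := ringChar.charP K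
  obtain ⟨k, hrp, hcardK⟩ := FiniteField.card K (ringChar K)
  have h1 : ringChar K ∣ p ^ n := by
    rw [← hK, hcardK]
    exact dvd_pow_self _ k.pos.ne'
  exact (Nat.prime_dvd_prime_iff_eq hrp hp).mp (hrp.dvd_of_dvd_pow h1)

lemma my_sq_ratio {F : Type*} [Field F] [Fintype F] [DecidableEq F]
    (h2 : ringChar F ≠ 2) {x y : F} (hx : x ≠ 0) (hy : y ≠ 0)
    (hh : (IsSquare x ∧ IsSquare y) ∨ (¬IsSquare x ∧ ¬IsSquare y)) :
    ∃ r : F, r ≠ 0 ∧ x = r ^ 2 * y := by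
  have hxy : IsSquare (x * y) := by
    rcases hh with ⟨⟨u, hu⟩, ⟨w, hw⟩⟩ | ⟨hxn, hyn⟩
    · exact ⟨u * w, by rw [hu, hw]; ring⟩
    · have h1 : quadraticChar F x = -1 := (quadraticChar_neg_one_iff_not_isSquare).mpr hxn
      have h2' : quadraticChar F y = -1 := (quadraticChar_neg_one_iff_not_isSquare).mpr hyn
      have h3 : quadraticChar F (x * y) = 1 := by
        rw [map_mul, h1, h2']; ring
      exact (quadraticChar_one_iff_isSquare (mul_ne_zero hx hy)).mp h3
  obtain ⟨r, hr⟩ := hxy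
  have hr0 : r ≠ 0 := by
    intro h0; rw [h0, mul_zero] at hr; exact (mul_ne_zero hx hy) hr
  refine ⟨r * y⁻¹, by simp [hr0, hy], ?_⟩
  field_simp
  linear_combination hr


lemma emb_exists (p m : ℕ) (hp : p.Prime) (hodd : p ≠ 2) (hm : 0 < m)
    (F K : Type*) [Field F] [Fintype F] [Field K] [Fintype K] [DecidableEq K]
    (q l : ℕ) (hqpm : q = p ^ m) (hl : 1 ≤ l)
    (hF : Fintype.card F = q) (hK : Fintype.card K = q ^ l) :
    Nonempty (F →+* K) := by
  have hq1 : 1 < q := by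
    rw [hqpm]; exact Nat.one_lt_pow (by omega) hp.one_lt
  -- char of K is p
  haveI : CharP K (ringChar K) := ringChar.charP K
  obtain ⟨k, hrp, hcardK⟩ := FiniteField.card K (ringChar K)
  have hrpp : ringChar K = p := by
    have h1 : ringChar K ∣ p ^ (m * l) := by
      have h2 : Fintype.card K = p ^ (m * l) := by rw [hK, hqpm, ← pow_mul]
      rw [hcardK] at h2
      rw [← h2]
      exact dvd_pow_self _ k.pos.ne'
    exact (Nat.prime_dvd_prime_iff_eq hrp hp).mp (hrp.dvd_of_dvd_pow h1)
  haveI hcharp : CharP K p := hrpp ▸ ringChar.charP K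
  haveI : Fact p.Prime := ⟨hp⟩
  have hqodd : Odd q := by
    rw [hqpm]; exact (hp.odd_of_ne_two hodd).pow
  set Q := q ^ l with hQ
  have hQ1 : 1 < Q := one_lt_pow₀ hq1 (by omega)
  have hq0 : 0 < q := by omega
  -- f = X^q - X divides g = X^Q - X
  set f : K[X] := X ^ q - X with hf
  set g : K[X] := X ^ Q - X with hg
  have hfg : f ∣ g := by
    obtain ⟨k, hk⟩ : q - 1 ∣ Q - 1 := by
      simpa using Nat.sub_dvd_pow_sub_pow q 1 l
    have h1 : (X : K[X]) ^ (q-1) - 1 ∣ X ^ (Q-1) - 1 := by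
      have := sub_dvd_pow_sub_pow ((X : K[X]) ^ (q-1)) 1 k
      rwa [one_pow, ← pow_mul, ← hk] at this
    obtain ⟨c, hc⟩ := h1
    refine ⟨c, ?_⟩
    have e1 : f = X * (X ^ (q-1) - 1) := by
      rw [hf, mul_sub, mul_one, ← pow_succ']
      congr 2
      omega
    have e2 : g = X * (X ^ (Q-1) - 1) := by
      rw [hg, mul_sub, mul_one, ← pow_succ']
      congr 2
      omega
    rw [e1, e2, hc, mul_assoc]
  have hg0 : g ≠ 0 := by
    exact FiniteField.X_pow_card_sub_X_ne_zero K hQ1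
  have hf0 : f ≠ 0 := FiniteField.X_pow_card_sub_X_ne_zero K hq1
  have hgroots : g.roots = Finset.univ.val := by
    have := FiniteField.roots_X_pow_card_sub_X K
    rwa [hK] at this
  have hgsplits : g.Splits := by
    rw [splits_iff_card_roots, hgroots]
    show Multiset.card Finset.univ.val = (X ^ Q - X : K[X]).natDegree
    rw [FiniteField.X_pow_card_sub_X_natDegree_eq K hQ1, ← hK]
    rfl
  have hfroots_le : f.roots ≤ g.roots := Polynomial.roots.le_of_dvd hg0 hfg
  have hfnodup : f.roots.Nodup := by
    rw [hgroots] at hfroots_le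
    exact Multiset.nodup_of_le hfroots_le Finset.univ.nodup
  have hfsplits : f.Splits := Splits.of_dvd hgsplits hg0 hfg
  have hfcard : Multiset.card f.roots = q := by
    rw [splits_iff_card_roots] at hfsplits
    rw [hfsplits, FiniteField.X_pow_card_sub_X_natDegree_eq K hq1]
  have hmemroots : ∀ x : K, x ∈ f.roots.toFinset ↔ x ^ q = x := by
    intro x
    rw [Multiset.mem_toFinset, mem_roots hf0]
    simp only [hf, IsRoot.def, eval_sub, eval_pow, eval_X, sub_eq_zero]
  -- the subfield of solutions of x^q = x
  let K₀ : Subfield K :=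
    { carrier := {x : K | x ^ q = x}
      mul_mem' := by intro a b ha hb; simp only [Set.mem_setOf_eq] at *; rw [mul_pow, ha, hb]
      one_mem' := by simp
      add_mem' := by
        intro a b ha hb; simp only [Set.mem_setOf_eq] at *
        rw [hqpm] at ha hb ⊢
        rw [add_pow_char_pow, ha, hb]
      zero_mem' := by simp [Set.mem_setOf_eq, zero_pow (by omega : q ≠ 0)]
      neg_mem' := by
        intro a ha; simp only [Set.mem_setOf_eq] at *
        rw [hqodd.neg_pow, ha]
      inv_mem' := by
        intro a ha; simp only [Set.mem_setOf_eq] at *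
        rw [inv_pow, ha] }
  haveI fK₀ : Fintype K₀ := Fintype.ofFinset f.roots.toFinset (fun x => hmemroots x)
  have hcard0 : Fintype.card K₀ = q := by
    have H : ∀ x : K, x ∈ f.roots.toFinset ↔ x ∈ K₀ := fun x => hmemroots x
    rw [Fintype.card_of_subtype f.roots.toFinset H,
      Multiset.toFinset_card_of_nodup hfnodup, hfcard]
  exact ⟨(K₀.subtype).comp (FiniteField.ringEquivOfCardEq (hF.trans hcard0.symm)).toRingHom⟩

end Helpers

theorem stmt_15 (p m l : ℕ) (hp : p.Prime) (hodd : p ≠ 2) (hm : 0 < m) (hl : 1 ≤ l)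
    (q : ℕ) (hq : q = p ^ m)
    (F K : Type*) [Field F] [Fintype F] [DecidableEq F] [Field K] [Fintype K] [DecidableEq K]
    (hF : Fintype.card F = q) (hK : Fintype.card K = q ^ l)
    (n : ℕ) (hne : Even n) (hn2 : 2 ≤ n) (hnq : n ≤ q - 1)
    (h : SigmaG F n) :
    SigmaG K (n * q ^ (l - 1)) := by
  classical
  obtain ⟨-, -, S, hScard, hS⟩ := h
  have hq1 : 1 < q := by rw [hq]; exact Nat.one_lt_pow (by omega) hp.one_lt
  obtain ⟨e⟩ : Nonempty (F →+* K) := emb_exists p m hp hodd hm F K q l hq hl hF hK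
  letI : Algebra F K := e.toAlgebra
  have halg : (algebraMap F K) = e := RingHom.algebraMap_toAlgebra e
  have hsmul_def : ∀ (c : F) (x : K), c • x = e c * x := fun c x => by
    rw [Algebra.smul_def, halg]
  -- complement of the line spanned by 1
  set V1 : Submodule F K := Submodule.span F {1} with hV1def
  obtain ⟨A, hAcompl⟩ := Submodule.exists_isCompl V1
  have heV1 : ∀ c : F, e c ∈ V1 := by
    intro c
    rw [hV1def, Submodule.mem_span_singleton]
    exact ⟨c, by rw [hsmul_def, mul_one]⟩
  have hAV1 : ∀ x ∈ A, x ∈ V1 → x = 0 := by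
    intro x hx hx1
    exact (Submodule.disjoint_def.mp hAcompl.disjoint.symm) x hx hx1
  -- dimensions
  have hfinK : Module.finrank F K = l := by
    have h1 : Fintype.card K = Fintype.card F ^ Module.finrank F K := Module.card_eq_pow_finrank
    rw [hK, hF] at h1
    exact (Nat.pow_right_injective hq1 h1).symm
  have hfinA : Module.finrank F A = l - 1 := by
    have h1 := Submodule.finrank_add_eq_of_isCompl hAcompl
    rw [hV1def] at h1
    have h2 : Module.finrank F (Submodule.span F ({1} : Set K)) = 1 :=
      finrank_span_singleton one_ne_zero
    rw [h2, hfinK] at h1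
    omega
  -- A as a finset
  set A' : Finset K := Finset.univ.filter (· ∈ A) with hA'def
  have hA'mem : ∀ x : K, x ∈ A' ↔ x ∈ A := by intro x; simp [hA'def]
  have hA'card : A'.card = q ^ (l - 1) := by
    have h1 : Fintype.card A = Fintype.card F ^ Module.finrank F A := Module.card_eq_pow_finrank
    rw [hF, hfinA] at h1
    rw [hA'def, ← Fintype.card_subtype, h1]
  have h0A : (0 : K) ∈ A' := (hA'mem 0).mpr A.zero_mem
  -- the embedding map on pairs
  set φ : F × K → K := fun z => e z.1 + z.2 with hφdef
  have hinj : ∀ z₁ ∈ S ×ˢ A', ∀ z₂ ∈ S ×ˢ A', φ z₁ = φ z₂ → z₁ = z₂ := by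
    rintro ⟨s₁, a₁⟩ hz₁ ⟨s₂, a₂⟩ hz₂ hEq
    rw [mem_product] at hz₁ hz₂
    simp only [hφdef] at hEq
    have h1 : e s₁ - e s₂ = a₂ - a₁ := by linear_combination hEq
    have h2 : a₂ - a₁ ∈ A := A.sub_mem ((hA'mem a₂).mp hz₂.2) ((hA'mem a₁).mp hz₁.2)
    have h3 : a₂ - a₁ ∈ V1 := by rw [← h1, ← map_sub]; exact heV1 _
    have h4 : a₂ - a₁ = 0 := hAV1 _ h2 h3
    have h5 : a₁ = a₂ := by linear_combination -h4
    have h6 : s₁ = s₂ := by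
      apply e.injective
      rw [← sub_eq_zero, h1]
      exact h4
    rw [h5, h6]
  set S' : Finset K := (S ×ˢ A').image φ with hS'def
  have hS'card : S'.card = n * q ^ (l - 1) := by
    rw [hS'def, Finset.card_image_of_injOn (fun z₁ h₁ z₂ h₂ => hinj z₁ h₁ z₂ h₂),
      Finset.card_product, hScard, hA'card]
  -- constants
  set c : K := ∏ w ∈ A', (1 + w) with hcdef
  set D : K := ∏ w ∈ A'.erase 0, w with hDdef
  have hc0 : c ≠ 0 := by
    rw [hcdef]
    apply Finset.prod_ne_zero_iff.mpr
    intro w hw hw0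
    have h1 : w = -1 := by linear_combination hw0
    have h2 : (-1 : K) ∈ A := h1 ▸ (hA'mem w).mp hw
    have h3 : (-1 : K) ∈ V1 := by
      have := heV1 (-1)
      rwa [map_neg, map_one] at this
    have := hAV1 _ h2 h3
    exact one_ne_zero (neg_eq_zero.mp this)
  have hD0 : D ≠ 0 := by
    rw [hDdef]
    apply Finset.prod_ne_zero_iff.mpr
    intro w hw
    exact (Finset.mem_erase.mp hw).1
  -- deltaS S s is nonzero
  have hdelta0 : ∀ s ∈ S, deltaS S s ≠ 0 := by
    intro s hs
    apply Finset.prod_ne_zero_iff.mpr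
    intro b hb
    rw [sub_ne_zero]
    exact fun hEq => (Finset.mem_erase.mp hb).1 hEq.symm
  -- key computation
  have key : ∀ s ∈ S, ∀ a ∈ A',
      deltaS S' (φ (s, a)) = D * (c ^ (n - 1) * e (deltaS S s)) := by
    intro s hs a ha
    have hsa : (s, a) ∈ S ×ˢ A' := Finset.mem_product.mpr ⟨hs, ha⟩
    have himg : S'.erase (φ (s, a)) = ((S ×ˢ A').erase (s, a)).image φ := by
      ext b
      constructor
      · intro hb
        obtain ⟨hbne, hbS'⟩ := Finset.mem_erase.mp hb
        obtain ⟨z, hz, rfl⟩ := Finset.mem_image.mp hbS'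
        refine Finset.mem_image.mpr ⟨z, Finset.mem_erase.mpr ⟨?_, hz⟩, rfl⟩
        rintro rfl; exact hbne rfl
      · intro hb
        obtain ⟨z, hz, rfl⟩ := Finset.mem_image.mp hb
        obtain ⟨hzne, hzS⟩ := Finset.mem_erase.mp hz
        exact Finset.mem_erase.mpr ⟨fun hEq => hzne (hinj z hzS (s, a) hsa hEq),
          Finset.mem_image.mpr ⟨z, hzS, rfl⟩⟩
    have hsplit : (S ×ˢ A').erase (s, a) =
        ({s} ×ˢ A'.erase a) ∪ ((S.erase s) ×ˢ A') := by
      ext ⟨s', a'⟩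
      simp only [Finset.mem_erase, Finset.mem_product, Finset.mem_union,
        Finset.mem_singleton, Prod.mk.injEq, ne_eq]
      constructor
      · rintro ⟨hne', hs', ha'⟩
        by_cases hss : s' = s
        · subst hss
          left
          refine ⟨rfl, fun hEq => hne' ⟨rfl, hEq⟩, ha'⟩
        · right; exact ⟨⟨hss, hs'⟩, ha'⟩
      · rintro (⟨rfl, hne', ha'⟩ | ⟨⟨hss, hs'⟩, ha'⟩)
        · exact ⟨fun hEq => hne' hEq.2, hs, ha'⟩
        · exact ⟨fun hEq => hss hEq.1, hs', ha'⟩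
    have hdisj : Disjoint ({s} ×ˢ A'.erase a) ((S.erase s) ×ˢ A') := by
      rw [Finset.disjoint_left]
      rintro ⟨s', a'⟩ h1 h2
      rw [Finset.mem_product, Finset.mem_singleton] at h1
      rw [Finset.mem_product, Finset.mem_erase] at h2
      exact h2.1.1 h1.1
    have hprod1 : ∏ a' ∈ A'.erase a, (φ (s, a) - φ (s, a')) = D := by
      rw [hDdef]
      refine Finset.prod_nbij' (fun a' => a - a') (fun w => a - w) ?_ ?_ ?_ ?_ ?_
      · intro a' ha'
        rw [Finset.mem_erase] at ha' ⊢
        refine ⟨sub_ne_zero.mpr fun hEq => ha'.1 hEq.symm, ?_⟩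
        exact (hA'mem _).mpr (A.sub_mem ((hA'mem a).mp ha) ((hA'mem a').mp ha'.2))
      · intro w hw
        rw [Finset.mem_erase] at hw ⊢
        refine ⟨fun hEq => hw.1 (by linear_combination -hEq), ?_⟩
        exact (hA'mem _).mpr (A.sub_mem ((hA'mem a).mp ha) ((hA'mem w).mp hw.2))
      · intro a' _; ring
      · intro w _; ring
      · intro a' _; simp only [hφdef]; ring
    have hprod2 : ∀ s' ∈ S.erase s,
        ∏ a' ∈ A', (φ (s, a) - φ (s', a')) = e (s - s') * c := by
      intro s' hs'
      have hss' : s - s' ≠ 0 := sub_ne_zero.mpr (Finset.mem_erase.mp hs').1.symm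
      have step1 : ∏ a' ∈ A', (φ (s, a) - φ (s', a')) = ∏ v ∈ A', (e (s - s') + v) := by
        refine Finset.prod_nbij' (fun a' => a - a') (fun v => a - v) ?_ ?_ ?_ ?_ ?_
        · intro a' ha'
          exact (hA'mem _).mpr (A.sub_mem ((hA'mem a).mp ha) ((hA'mem a').mp ha'))
        · intro v hv
          exact (hA'mem _).mpr (A.sub_mem ((hA'mem a).mp ha) ((hA'mem v).mp hv))
        · intro a' _; ring
        · intro v _; ring
        · intro a' _; simp only [hφdef, map_sub]; ring
      have step2 : ∏ v ∈ A', (e (s - s') + v) = ∏ w ∈ A', (e (s - s') + (s - s') • w) := by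
        refine Finset.prod_nbij' (fun v => (s - s')⁻¹ • v) (fun w => (s - s') • w) ?_ ?_ ?_ ?_ ?_
        · intro v hv
          exact (hA'mem _).mpr (A.smul_mem _ ((hA'mem v).mp hv))
        · intro w hw
          exact (hA'mem _).mpr (A.smul_mem _ ((hA'mem w).mp hw))
        · intro v _; rw [smul_smul, mul_inv_cancel₀ hss', one_smul]
        · intro w _; rw [smul_smul, inv_mul_cancel₀ hss', one_smul]
        · intro v _; rw [smul_smul, mul_inv_cancel₀ hss', one_smul]
      have step3 : ∏ w ∈ A', (e (s - s') + (s - s') • w) = e (s - s') ^ A'.card * c := by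
        have hcong : ∀ w ∈ A', e (s - s') + (s - s') • w = e (s - s') * (1 + w) := by
          intro w _; rw [hsmul_def]; ring
        rw [Finset.prod_congr rfl hcong, Finset.prod_mul_distrib, Finset.prod_const, hcdef]
      have step4 : e (s - s') ^ A'.card = e (s - s') := by
        rw [hA'card, ← map_pow]
        congr 1
        rw [← hF]
        exact FiniteField.pow_card_pow _ _
      rw [step1, step2, step3, step4]
    -- assemble
    have hinj' : ∀ z₁ ∈ (S ×ˢ A').erase (s, a), ∀ z₂ ∈ (S ×ˢ A').erase (s, a),
        φ z₁ = φ z₂ → z₁ = z₂ := fun z₁ h₁ z₂ h₂ =>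
      hinj z₁ (Finset.erase_subset _ _ h₁) z₂ (Finset.erase_subset _ _ h₂)
    rw [deltaS, himg, Finset.prod_image hinj', hsplit, Finset.prod_union hdisj,
      Finset.prod_product, Finset.prod_singleton, Finset.prod_product,
      hprod1, Finset.prod_congr rfl hprod2, Finset.prod_mul_distrib,
      Finset.prod_const, ← map_prod, Finset.card_erase_of_mem hs, hScard]
    rw [deltaS]
    ring
  -- final assembly
  have hqpow1 : 1 ≤ q ^ (l - 1) := Nat.one_le_pow _ _ (by omega)
  refine ⟨hne.mul_right _, le_trans hn2 (Nat.le_mul_of_pos_right n (by omega)), S', hS'card, ?_⟩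
  obtain ⟨s₀, hs₀⟩ := Finset.card_pos.mp (by rw [hScard]; omega : 0 < S.card)
  have hchF : ringChar F ≠ 2 := by
    rw [my_ringChar_eq p m hp hm F (by rw [hF, hq])]
    exact hodd
  have hr : ∀ s ∈ S, ∃ r : F, r ≠ 0 ∧ deltaS S s = r ^ 2 * deltaS S s₀ := by
    intro s hs
    refine my_sq_ratio hchF (hdelta0 s hs) (hdelta0 s₀ hs₀) ?_
    rcases hS with h | h
    · exact Or.inl ⟨h s hs, h s₀ hs₀⟩
    · exact Or.inr ⟨h s hs, h s₀ hs₀⟩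
  set C : K := D * (c ^ (n - 1) * e (deltaS S s₀)) with hCdef
  have hC0 : C ≠ 0 :=
    mul_ne_zero hD0 (mul_ne_zero (pow_ne_zero _ hc0)
      ((map_ne_zero_iff e e.injective).mpr (hdelta0 s₀ hs₀)))
  have hval : ∀ x ∈ S', ∃ t : K, t ≠ 0 ∧ deltaS S' x = C * t ^ 2 := by
    intro x hx
    rw [hS'def, Finset.mem_image] at hx
    obtain ⟨⟨s, a⟩, hz, rfl⟩ := hx
    rw [Finset.mem_product] at hz
    obtain ⟨r, hr0, hreq⟩ := hr s hz.1
    refine ⟨e r, (map_ne_zero_iff e e.injective).mpr hr0, ?_⟩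
    rw [key s hz.1 a hz.2, hreq]
    simp only [map_mul, map_pow, hCdef]
    ring
  by_cases hCsq : IsSquare C
  · left
    intro x hx
    obtain ⟨t, ht0, htx⟩ := hval x hx
    obtain ⟨u, hu⟩ := hCsq
    exact ⟨u * t, by rw [htx, hu]; ring⟩
  · right
    intro x hx hsq
    obtain ⟨t, ht0, htx⟩ := hval x hx
    rw [htx] at hsq
    obtain ⟨v, hv⟩ := hsq
    apply hCsq
    refine ⟨v * t⁻¹, ?_⟩
    field_simp
    linear_combination hv
end

section
/- Let p be an odd prime, r = p^m, and q = r^s with s even. Then for every l with 1 ≤ l ≤ (r − 1)/2, the number l·(q−1)/(r−1) belongs to Σ(g, q) and the number l·(q−1)/(r−1) + 2 belongs to Σ(eg, q). -/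
open Finset

lemma prod_erase_product {M : Type*} [CommMonoid M] {α β : Type*} [DecidableEq α] [DecidableEq β]
    (A : Finset α) (B : Finset β) {i : α} {h : β} (hi : i ∈ A) (hh : h ∈ B) (f : α × β → M) :
    ∏ x ∈ (A ×ˢ B).erase (i, h), f x =
      (∏ b ∈ B.erase h, f (i, b)) * ∏ a ∈ A.erase i, ∏ b ∈ B, f (a, b) := by
  have hset : (A ×ˢ B).erase (i, h) = ({i} ×ˢ B.erase h) ∪ (A.erase i) ×ˢ B := by
    ext ⟨a, b⟩
    simp only [Finset.mem_erase, Finset.mem_product, Finset.mem_union, Finset.mem_singleton,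
      Prod.mk.injEq, ne_eq]
    constructor
    · rintro ⟨hne, ha, hb⟩
      by_cases hai : a = i
      · subst hai
        exact Or.inl ⟨rfl, ⟨fun hbh => hne ⟨rfl, hbh⟩, hb⟩⟩
      · exact Or.inr ⟨⟨hai, ha⟩, hb⟩
    · rintro (⟨rfl, hbh, hb⟩ | ⟨⟨hai, ha⟩, hb⟩)
      · exact ⟨fun hx => hbh hx.2, hi, hb⟩
      · exact ⟨fun hx => hai hx.1, ha, hb⟩
  have hdisj : Disjoint ({i} ×ˢ B.erase h) ((A.erase i) ×ˢ B) := by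
    rw [Finset.disjoint_left]
    rintro ⟨a, b⟩ h1 h2
    simp only [Finset.mem_product, Finset.mem_singleton, Finset.mem_erase] at h1 h2
    exact h2.1.1 (h1.1 ▸ rfl)
  rw [hset, Finset.prod_union hdisj, Finset.prod_product, Finset.prod_product,
    Finset.prod_singleton]

lemma image_erase_injOn {α β : Type*} [DecidableEq α] [DecidableEq β] {f : α → β} {s : Finset α}
    (hinj : Set.InjOn f s) {x : α} (hx : x ∈ s) :
    (s.image f).erase (f x) = (s.erase x).image f := by
  ext b
  simp only [Finset.mem_erase, Finset.mem_image, ne_eq]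
  constructor
  · rintro ⟨hne, a, ha, rfl⟩
    exact ⟨a, ⟨fun hax => hne (hax ▸ rfl), ha⟩, rfl⟩
  · rintro ⟨a, ⟨hax, ha⟩, rfl⟩
    exact ⟨fun hfe => hax (hinj ha hx hfe), a, ha, rfl⟩

theorem stmt_17 (p m s : ℕ) (hp : p.Prime) (hodd : p ≠ 2) (hm : 0 < m)
    (hse : Even s) (hs0 : 0 < s)
    (r : ℕ) (hr : r = p ^ m)
    (F : Type*) [Field F] [Fintype F] [DecidableEq F] (hF : Fintype.card F = r ^ s)
    (l : ℕ) (hl1 : 1 ≤ l) (hl2 : l ≤ (r - 1) / 2) :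
    SigmaG F (l * ((r ^ s - 1) / (r - 1))) ∧
    SigmaEG F (l * ((r ^ s - 1) / (r - 1)) + 2) := by
  rw [SigmaG, SigmaEG]
  classical
  set q := r ^ s with hq
  have hp3 : 3 ≤ p := by have := hp.two_le; omega
  have hr3 : 3 ≤ r := le_trans hp3 (hr ▸ Nat.le_self_pow (by omega) p)
  have hrodd : r % 2 = 1 := by
    subst hr
    have h1 : p % 2 = 1 := Nat.odd_iff.mp (hp.odd_of_ne_two hodd)
    rw [Nat.pow_mod, h1, one_pow]; rfl
  have hs2 : 2 ≤ s := by obtain ⟨k, hk⟩ := hse; omega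
  have hse' : s % 2 = 0 := Nat.even_iff.mp hse
  have hqr2 : r ^ 2 ≤ q := Nat.pow_le_pow_right (by omega) hs2
  have hq9 : 9 ≤ q := le_trans (by nlinarith : 9 ≤ r ^ 2) hqr2
  set d := (q - 1) / (r - 1) with hd
  have hdvd : (r - 1) ∣ (q - 1) := by
    simpa using Nat.sub_dvd_pow_sub_pow r 1 s
  have hrd : (r - 1) * d = q - 1 := Nat.mul_div_cancel' hdvd
  have hqodd : q % 2 = 1 := by rw [hq, Nat.pow_mod, hrodd, one_pow]; rfl
  have hsq2 : r ^ 2 - 1 = (r + 1) * (r - 1) := by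
    zify [show 1 ≤ r ^ 2 by nlinarith, show 1 ≤ r by omega]; ring
  have hdvd2 : (r ^ 2 - 1) ∣ (q - 1) := by
    have h1 : (r ^ 2) - 1 ∣ (r ^ 2) ^ (s / 2) - 1 := by
      simpa using Nat.sub_dvd_pow_sub_pow (r ^ 2) 1 (s / 2)
    rwa [← pow_mul, show 2 * (s / 2) = s by omega] at h1
  have hr1d : (r + 1) ∣ d := by
    obtain ⟨c, hc⟩ := hdvd2
    refine ⟨c, Nat.eq_of_mul_eq_mul_left (show 0 < r - 1 by omega) ?_⟩
    rw [hrd, hc, hsq2]; ring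
  have hdpos : 0 < d := by
    rcases Nat.eq_zero_or_pos d with h | h
    · rw [h, Nat.mul_zero] at hrd; omega
    · exact h
  have hd2 : r + 1 ≤ d := Nat.le_of_dvd hdpos hr1d
  have hdeven : 2 ∣ d := dvd_trans (by omega : (2:ℕ) ∣ r + 1) hr1d
  set e := (r - 1) / 2 with he
  have h2e : 2 * e = r - 1 := by omega
  have hlle : l ≤ e := hl2
  have hepos : 0 < e := by omega
  have hq12 : q - 1 = 2 * (e * d) := by rw [← hrd, ← h2e]; ring
  have hcard2 : Fintype.card F / 2 = e * d := by
    rw [hF]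
    obtain ⟨N, hN⟩ : ∃ N, e * d = N := ⟨_, rfl⟩
    rw [hN]; rw [hN] at hq12; omega
  -- characteristic
  haveI hfact : Fact p.Prime := ⟨hp⟩
  have hpF : (p : F) = 0 := by
    have h0 : ((Fintype.card F : ℕ) : F) = 0 := FiniteField.cast_card_eq_zero F
    rw [hF, hq, hr, ← pow_mul] at h0
    push_cast at h0
    exact pow_eq_zero_iff (Nat.mul_ne_zero (by omega) (by omega)) |>.mp h0
  haveI hcharp : CharP F p := (CharP.charP_iff_prime_eq_zero hp).mpr hpF
  have hchar2 : ringChar F ≠ 2 := by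
    have : ringChar F = p := ringChar.eq F p ▸ rfl
    omega
  have hrF : (r : F) = 0 := by
    rw [hr]; push_cast; rw [hpF]; exact zero_pow (by omega)
  have hqF : ((q : ℕ) : F) = 0 := by rw [← hF]; exact FiniteField.cast_card_eq_zero F
  have hdF : ((d : ℕ) : F) = 1 := by
    have h1 : ((r - 1 : ℕ) : F) * ((d : ℕ) : F) = ((q - 1 : ℕ) : F) := by
      rw [← Nat.cast_mul, hrd]
    rw [Nat.cast_sub (by omega), Nat.cast_sub (by omega), hrF, hqF] at h1
    push_cast at h1
    have h2 : (-1 : F) * (d : F) = -1 := by linear_combination h1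
    have := neg_inj.mp (by linear_combination h2 : -(d : F) = -1)
    exact this
  -- generator
  obtain ⟨ξ, hξ⟩ := IsCyclic.exists_generator (α := Fˣ)
  have hordξ : orderOf ξ = q - 1 := by
    rw [orderOf_eq_card_of_forall_mem_zpowers hξ, Nat.card_eq_fintype_card, Fintype.card_units, hF]
  set g : F := (ξ : F) with hgdef
  have hg0 : g ≠ 0 := ξ.ne_zero
  have hordg : orderOf g = q - 1 := by rw [hgdef, orderOf_units, hordξ]
  have hprim : IsPrimitiveRoot g (q - 1) := hordg ▸ IsPrimitiveRoot.orderOf g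
  have hgq1 : g ^ (q - 1) = 1 := by rw [← hordg]; exact pow_orderOf_eq_one g
  have hζ : IsPrimitiveRoot (g ^ (2 * e)) d :=
    hprim.pow (by omega) (by rw [hq12]; ring)
  set T := Polynomial.nthRootsFinset d (1 : F) with hT
  have hcardT : T.card = d := hζ.card_nthRootsFinset
  have hmemT : ∀ {x : F}, x ∈ T ↔ x ^ d = 1 := fun {x} => Polynomial.mem_nthRootsFinset hdpos (1 : F)
  have hT0 : ∀ x ∈ T, x ≠ 0 := by
    intro x hx h0
    have h1 := hmemT.mp hx
    rw [h0, zero_pow hdpos.ne'] at h1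
    exact zero_ne_one h1
  have hpoly : (Polynomial.X ^ d - 1 : Polynomial F) =
      ∏ b ∈ T, (Polynomial.X - Polynomial.C b) :=
    Polynomial.X_pow_sub_one_eq_prod hdpos hζ
  have hprodT : ∀ x : F, ∏ b ∈ T, (x - b) = x ^ d - 1 := by
    intro x
    have h1 := congrArg (Polynomial.eval x) hpoly
    simpa [Polynomial.eval_prod] using h1.symm
  have hprodTc : ∀ c x : F, c ≠ 0 → ∏ b ∈ T, (x - c * b) = x ^ d - c ^ d := by
    intro c x hc
    have h1 : ∀ b ∈ T, x - c * b = c * (x * c⁻¹ - b) := by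
      intro b _; field_simp
    rw [Finset.prod_congr rfl h1, Finset.prod_mul_distrib, Finset.prod_const, hcardT, hprodT]
    rw [← div_eq_mul_inv, div_pow, mul_sub, mul_div_cancel₀ _ (pow_ne_zero d hc), mul_one]
  have hprodErase : ∀ h ∈ T, ∏ b ∈ T.erase h, (h - b) = h ^ (d - 1) := by
    intro h hhT
    have hhd : h ^ d = 1 := hmemT.mp hhT
    have hXC : (Polynomial.X - Polynomial.C h : Polynomial F) ≠ 0 := Polynomial.X_sub_C_ne_zero h
    have h1 : (Polynomial.X - Polynomial.C h) * ∏ b ∈ T.erase h, (Polynomial.X - Polynomial.C b)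
        = (Polynomial.X - Polynomial.C h) *
          ∑ i ∈ Finset.range d, Polynomial.X ^ i * (Polynomial.C h) ^ (d - 1 - i) := by
      rw [Finset.mul_prod_erase T (fun b => Polynomial.X - Polynomial.C b) hhT, ← hpoly, mul_comm
        (Polynomial.X - Polynomial.C h), geom_sum₂_mul, ← Polynomial.C_pow, hhd, map_one]
    have h2 := mul_left_cancel₀ hXC h1
    have h3 := congrArg (Polynomial.eval h) h2
    simp only [Polynomial.eval_prod, Polynomial.eval_sub, Polynomial.eval_X, Polynomial.eval_C,
      Polynomial.eval_finset_sum, Polynomial.eval_mul, Polynomial.eval_pow] at h3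
    rw [h3]
    have h4 : ∀ i ∈ Finset.range d, h ^ i * h ^ (d - 1 - i) = h ^ (d - 1) := by
      intro i hi
      rw [← pow_add]
      congr 1
      simp only [Finset.mem_range] at hi
      omega
    rw [Finset.sum_congr rfl h4, Finset.sum_const, Finset.card_range, nsmul_eq_mul, hdF, one_mul]
  -- squares
  have hsq : ∀ x : F, x ≠ 0 → x ^ (e * d) = 1 → IsSquare x := by
    intro x hx h1
    rw [FiniteField.isSquare_iff hchar2 hx, hcard2]
    exact h1
  have hTsq : ∀ h ∈ T, IsSquare h := by
    intro h hh
    refine hsq h (hT0 h hh) ?_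
    rw [mul_comm, pow_mul, hmemT.mp hh, one_pow]
  have hdeven' : Even d := (even_iff_two_dvd).mpr hdeven
  have hneg1 : IsSquare (-1 : F) := by
    refine hsq _ (by norm_num) ?_
    exact Even.neg_one_pow (hdeven'.mul_left e)
  have hFr : ∀ x : F, x ≠ 0 → x ^ (r - 1) = 1 → IsSquare x := by
    intro x hx h1
    apply hsq x hx
    obtain ⟨d', hd'⟩ := hdeven
    have h2 : e * d = (r - 1) * d' := by rw [hd', ← h2e]; ring
    rw [h2, pow_mul, h1, one_pow]
  -- the elements t i = norms of coset representatives
  set t : ℕ → F := fun i => g ^ (2 * i * d) with ht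
  have htsq : ∀ i, IsSquare (t i) := by
    intro i
    exact ⟨g ^ (i * d), by rw [ht, ← pow_add]; congr 1; ring⟩
  have htinj : ∀ i < l, ∀ j < l, t i = t j → i = j := by
    intro i hi j hj hij
    have hij' : ((ξ ^ (2 * i * d) : Fˣ) : F) = ((ξ ^ (2 * j * d) : Fˣ) : F) := by
      push_cast
      exact hij
    have h1 := pow_eq_pow_iff_modEq.mp (Units.ext hij')
    rw [hordξ, hq12] at h1
    have h2 : 2 * i * d < 2 * (e * d) := by
      rw [show 2 * (e * d) = 2 * e * d by ring]
      exact (Nat.mul_lt_mul_right hdpos).mpr (by omega)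
    have h3 : 2 * j * d < 2 * (e * d) := by
      rw [show 2 * (e * d) = 2 * e * d by ring]
      exact (Nat.mul_lt_mul_right hdpos).mpr (by omega)
    have h4 : 2 * i * d = 2 * j * d := by
      unfold Nat.ModEq at h1
      rwa [Nat.mod_eq_of_lt h2, Nat.mod_eq_of_lt h3] at h1
    have h5 := Nat.eq_of_mul_eq_mul_right hdpos h4
    omega
  have htr1 : ∀ i, t i ^ (r - 1) = 1 := by
    intro i
    rw [ht]
    simp only
    rw [← pow_mul, show 2 * i * d * (r - 1) = (q - 1) * (2 * i) by rw [← hrd]; ring,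
      pow_mul, hgq1, one_pow]
  have htr : ∀ i, t i ^ r = t i := by
    intro i
    rw [show r = (r - 1) + 1 by omega, pow_succ, htr1, one_mul]
  have htdiff : ∀ i < l, ∀ j < l, i ≠ j → IsSquare (t i - t j) := by
    intro i hi j hj hne
    have hne' : t i - t j ≠ 0 := sub_ne_zero.mpr fun h => hne (htinj i hi j hj h)
    apply hFr _ hne'
    have hfrob : (t i - t j) ^ r = t i ^ r - t j ^ r := by
      rw [hr]; exact sub_pow_char_pow (R := F) (x := t i) (y := t j) (n := m) (p := p)
    rw [htr i, htr j] at hfrob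
    have h6 : (t i - t j) ^ (r - 1) * (t i - t j) = 1 * (t i - t j) := by
      rw [← pow_succ, show r - 1 + 1 = r by omega, hfrob, one_mul]
    exact mul_right_cancel₀ hne' h6
  -- the set S
  set f : ℕ × F → F := fun x => g ^ (2 * x.1) * x.2 with hf
  have hfne : ∀ x : ℕ × F, x.2 ∈ T → f x ≠ 0 :=
    fun x hx => mul_ne_zero (pow_ne_zero _ hg0) (hT0 _ hx)
  have hfd : ∀ i : ℕ, ∀ h ∈ T, f (i, h) ^ d = t i := by
    intro i h hh
    rw [hf]
    simp only
    rw [mul_pow, ← pow_mul, hmemT.mp hh, mul_one, ht]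
  have hinj : Set.InjOn f ↑(Finset.range l ×ˢ T) := by
    rintro ⟨i, h⟩ hih ⟨j, h'⟩ hjh' heq
    simp only [Finset.coe_product, Set.mem_prod, Finset.mem_coe, Finset.mem_range] at hih hjh'
    have h1 : t i = t j := by rw [← hfd i h hih.2, ← hfd j h' hjh'.2, heq]
    have hij : i = j := htinj i hih.1 j hjh'.1 h1
    subst hij
    have h2 : h = h' := by
      have := heq
      rw [hf] at this
      simp only at this
      exact mul_left_cancel₀ (pow_ne_zero _ hg0) this
    rw [h2]
  set S := (Finset.range l ×ˢ T).image f with hS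
  have hcardS : S.card = l * d := by
    rw [hS, Finset.card_image_of_injOn hinj, Finset.card_product, Finset.card_range, hcardT]
  -- main formula for deltaS S a
  have hmain : ∀ a ∈ S, ∃ i, i < l ∧ ∃ h ∈ T, a = f (i, h) ∧
      deltaS S a = (g ^ (2 * i)) ^ (d - 1) * h ^ (d - 1) *
        ∏ j ∈ (Finset.range l).erase i, (t i - t j) := by
    intro a ha
    rw [hS, Finset.mem_image] at ha
    obtain ⟨⟨i, h⟩, hih, rfl⟩ := ha
    have hih' := hih
    rw [Finset.mem_product, Finset.mem_range] at hih'
    obtain ⟨hi, hh⟩ := hih'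
    refine ⟨i, hi, h, hh, rfl, ?_⟩
    have hkey : S.erase (f (i, h)) = ((Finset.range l ×ˢ T).erase (i, h)).image f := by
      rw [hS]; exact image_erase_injOn hinj hih
    rw [deltaS, hkey, Finset.prod_image (fun x hx y hy hxy => hinj
      (Finset.mem_coe.mpr (Finset.mem_of_mem_erase hx))
      (Finset.mem_coe.mpr (Finset.mem_of_mem_erase hy)) hxy)]
    rw [prod_erase_product (Finset.range l) T (Finset.mem_range.mpr hi) hh
      (fun x => f (i, h) - f x)]
    have hA : ∏ b ∈ T.erase h, (f (i, h) - f (i, b)) = (g ^ (2 * i)) ^ (d - 1) * h ^ (d - 1) := by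
      have h1 : ∀ b ∈ T.erase h, f (i, h) - f (i, b) = g ^ (2 * i) * (h - b) := by
        intro b _
        rw [hf]
        simp only
        ring
      rw [Finset.prod_congr rfl h1, Finset.prod_mul_distrib, Finset.prod_const,
        Finset.card_erase_of_mem hh, hcardT, hprodErase h hh]
    have hB : ∀ j ∈ (Finset.range l).erase i, ∏ b ∈ T, (f (i, h) - f (j, b)) = t i - t j := by
      intro j hj
      have h1 : ∀ b ∈ T, f (i, h) - f (j, b) = f (i, h) - g ^ (2 * j) * b := fun b _ => rfl
      rw [Finset.prod_congr rfl h1, hprodTc (g ^ (2 * j)) (f (i, h)) (pow_ne_zero _ hg0),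
        hfd i h hh, ← pow_mul]
    rw [hA, Finset.prod_congr rfl hB]
  have hSsq : ∀ a ∈ S, IsSquare a ∧ IsSquare (deltaS S a) := by
    intro a ha
    obtain ⟨i, hi, h, hh, rfl, heq⟩ := hmain _ ha
    have hgsq : IsSquare (g ^ (2 * i)) := ⟨g ^ i, by rw [← pow_add]; congr 1; ring⟩
    constructor
    · exact hgsq.mul (hTsq h hh)
    · rw [heq]
      refine ((hgsq.pow _).mul ((hTsq h hh).pow _)).mul ?_
      refine Finset.prod_induction _ IsSquare (fun _ _ => IsSquare.mul) IsSquare.one ?_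
      intro j hj
      rw [Finset.mem_erase, Finset.mem_range] at hj
      exact htdiff i hi j hj.2 (Ne.symm hj.1)
  have h0S : (0 : F) ∉ S := by
    intro h0
    obtain ⟨i, hi, h, hh, heq, _⟩ := hmain 0 h0
    exact hfne (i, h) hh heq.symm
  have hld2 : 2 ≤ l * d := le_trans (by omega) (Nat.mul_le_mul hl1 (by omega : 2 ≤ d))
  have hldeven : Even (l * d) := hdeven'.mul_left l
  constructor
  · exact ⟨hldeven, hld2, S, hcardS, Or.inl fun a ha => (hSsq a ha).2⟩
  · refine ⟨by simpa using hldeven.add even_two, by omega, insert 0 S, ?_, ?_⟩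
    · rw [Finset.card_insert_of_notMem h0S, hcardS]; omega
    · intro a ha
      rcases Finset.mem_insert.mp ha with rfl | haS
      · have h1 : deltaS (insert 0 S) 0 = ∏ b ∈ S, (0 - b) := by
          rw [deltaS, Finset.erase_insert h0S]
        have h2 : ∏ b ∈ S, ((0 : F) - b) = (-1) ^ (l * d) * ∏ b ∈ S, b := by
          rw [Finset.prod_congr rfl (fun b _ => by ring : ∀ b ∈ S, (0 : F) - b = (-1) * b),
            Finset.prod_mul_distrib, Finset.prod_const, hcardS]
        rw [h1, h2, hldeven.neg_one_pow, one_mul,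
          show -(∏ b ∈ S, b) = (-1) * ∏ b ∈ S, b by ring]
        exact hneg1.mul (Finset.prod_induction _ IsSquare (fun _ _ => IsSquare.mul)
          IsSquare.one fun b hb => (hSsq b hb).1)
      · have hane : a ≠ 0 := fun h => h0S (h ▸ haS)
        have h1 : deltaS (insert 0 S) a = a * deltaS S a := by
          rw [deltaS, Finset.erase_insert_of_ne (Ne.symm hane),
            Finset.prod_insert (fun hmem => h0S (Finset.mem_of_mem_erase hmem)), sub_zero,
            deltaS]
        rw [h1, show -(a * deltaS S a) = (-1) * (a * deltaS S a) by ring]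
        exact hneg1.mul ((hSsq a haS).1.mul (hSsq a haS).2)
end

section
/- Let p be an odd prime, r = p^m, and q = r^s with s odd, and let 1 ≤ l ≤ r − 1. If l is even and l belongs to Σ(g, r), then l·(q−1)/(r−1) belongs to Σ(g, q); and if l is odd and l + 1 belongs to Σ(eg, r), then l·(q−1)/(r−1) + 1 belongs to Σ(eg, q). -/
open Finset

/-- Natural number geometric sum identity. -/
lemma aux_nat_geom (r s : ℕ) (hr : 1 ≤ r) :
    (r - 1) * (∑ i ∈ Finset.range s, r ^ i) = r ^ s - 1 := by
  have key : (((r - 1) * ∑ i ∈ Finset.range s, r ^ i : ℕ) : ℤ) = ((r ^ s - 1 : ℕ) : ℤ) := by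
    push_cast [Nat.cast_sub hr, Nat.cast_sub (Nat.one_le_pow s r hr)]
    rw [mul_comm]
    exact geom_sum_mul _ _
  exact Nat.cast_injective key

lemma aux_odd_geom {r s : ℕ} (hr : Odd r) (hs : Odd s) :
    Odd (∑ i ∈ Finset.range s, r ^ i) := by
  rw [Nat.odd_iff, Finset.sum_nat_mod,
    Finset.sum_congr rfl fun i _ => Nat.odd_iff.mp hr.pow]
  simpa [Finset.sum_const, Finset.card_range] using Nat.odd_iff.mp hs

lemma aux_isSquare_sq_mul {F : Type*} [Field F] {u : F} (hu : u ≠ 0) (x : F) :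
    IsSquare (u ^ 2 * x) ↔ IsSquare x := by
  constructor
  · rintro ⟨v, hv⟩
    refine ⟨v / u, ?_⟩
    field_simp
    rw [pow_two v, ← hv]; ring
  · rintro ⟨v, rfl⟩
    exact ⟨u * v, by ring⟩

lemma aux_charP_of_card {K : Type*} [Field K] [Fintype K] {p n : ℕ} (hp : p.Prime)
    (h : Fintype.card K = p ^ n) : CharP K p := by
  obtain ⟨n', hp', hcard⟩ := FiniteField.card K (ringChar K)
  have heq : ringChar K ^ (n' : ℕ) = p ^ n := hcard.symm.trans h
  have hdvd : ringChar K ∣ p ^ n := heq ▸ dvd_pow_self (ringChar K) n'.ne_zero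
  have : ringChar K = p :=
    (Nat.prime_dvd_prime_iff_eq hp' hp).mp (hp'.dvd_of_dvd_pow hdvd)
  exact this ▸ ringChar.charP K


open Polynomial in
/-- The number of `n`-th roots of `c` in a field is at most `n`. -/
lemma aux_card_pow_eq_le {F : Type*} [Field F] [Fintype F] [DecidableEq F] {n : ℕ} (hn : 0 < n)
    (c : F) : ({x ∈ Finset.univ | x ^ n = c} : Finset F).card ≤ n := by
  classical
  set P : F[X] := X ^ n - C c with hP
  have hmonic : P.Monic := monic_X_pow_sub_C c hn.ne'
  have hsub : ({x ∈ Finset.univ | x ^ n = c} : Finset F) ⊆ P.roots.toFinset := by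
    intro β hβ
    simp only [Finset.mem_filter] at hβ
    rw [Multiset.mem_toFinset, mem_roots hmonic.ne_zero]
    simp [P, IsRoot, hβ.2]
  calc ({x ∈ Finset.univ | x ^ n = c} : Finset F).card
      ≤ P.roots.toFinset.card := Finset.card_le_card hsub
    _ ≤ Multiset.card P.roots := Multiset.toFinset_card_le _
    _ ≤ P.natDegree := P.card_roots'
    _ = n := natDegree_X_pow_sub_C

open Polynomial in
/-- If the fiber of `x ↦ x^t` over `b` has exactly `t` elements, then `X^t - b` factors as
the product of `X - β` over the fiber. -/
lemma aux_fib_prod_eq {F : Type*} [Field F] [Fintype F] [DecidableEq F] {t : ℕ} (ht : 0 < t)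
    (b : F) (hcard : ({x ∈ Finset.univ | x ^ t = b} : Finset F).card = t) :
    ∏ β ∈ ({x ∈ Finset.univ | x ^ t = b} : Finset F), (X - C β) = X ^ t - C b := by
  classical
  set fib : Finset F := {x ∈ Finset.univ | x ^ t = b} with hfib
  set P : F[X] := X ^ t - C b with hP
  have hmonic : P.Monic := monic_X_pow_sub_C b ht.ne'
  have hdeg : P.natDegree = t := natDegree_X_pow_sub_C
  have hle : fib.val ≤ P.roots := by
    rw [Multiset.le_iff_subset fib.nodup]
    intro β hβ
    have hβ' : β ∈ fib := hβ
    simp only [hfib, Finset.mem_filter] at hβ'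
    rw [mem_roots hmonic.ne_zero]
    simp [P, IsRoot, hβ'.2]
  have hcount : Multiset.card P.roots ≤ t := hdeg ▸ P.card_roots'
  have hcard' : Multiset.card fib.val = t := hcard
  have hroots : P.roots = fib.val :=
    (Multiset.eq_of_le_of_card_le hle (by rw [hcard']; exact hcount)).symm
  have hsplits : P.Splits := by
    rw [splits_iff_card_roots, hroots, hcard', hdeg]
  have := hsplits.eq_prod_roots_of_monic hmonic
  rw [hroots] at this
  rw [Finset.prod_eq_multiset_prod]
  exact this.symm

/-- Fiber counting: if `#F - 1 = d * t` and `b^d = 1`, the fiber of `x ↦ x^t` over `b`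
has exactly `t` elements. -/
lemma aux_fib_card {F : Type*} [Field F] [Fintype F] [DecidableEq F] {t d : ℕ} (ht : 0 < t)
    (hd : 0 < d) (hcard : Fintype.card F - 1 = d * t) {b : F} (hb : b ^ d = 1) :
    ({x ∈ Finset.univ | x ^ t = b} : Finset F).card = t := by
  classical
  set K : Finset F := {y ∈ Finset.univ | y ^ d = 1} with hK
  have hKcard : K.card ≤ d := aux_card_pow_eq_le hd 1
  have hne : ∀ y ∈ K, y ≠ 0 := by
    intro y hy
    simp only [hK, Finset.mem_filter] at hy
    intro h0
    rw [h0, zero_pow hd.ne'] at hy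
    exact one_ne_zero hy.2.symm
  have hmaps : ∀ x ∈ Finset.univ.erase (0 : F), x ^ t ∈ K := by
    intro x hx
    have hx0 : x ≠ 0 := (Finset.mem_erase.mp hx).1
    simp only [hK, Finset.mem_filter, Finset.mem_univ, true_and]
    rw [← pow_mul, mul_comm t d, ← hcard]
    exact FiniteField.pow_card_sub_one_eq_one x hx0
  have hsum : (Finset.univ.erase (0 : F)).card
      = ∑ y ∈ K, ((Finset.univ.erase (0 : F)).filter (fun x => x ^ t = y)).card :=
    Finset.card_eq_sum_card_fiberwise hmaps
  have herase : (Finset.univ.erase (0 : F)).card = Fintype.card F - 1 := by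
    rw [Finset.card_erase_of_mem (Finset.mem_univ _), Finset.card_univ]
  have hfeq : ∀ y ∈ K, (Finset.univ.erase (0 : F)).filter (fun x => x ^ t = y)
      = ({x ∈ Finset.univ | x ^ t = y} : Finset F) := by
    intro y hy
    ext x
    simp only [Finset.mem_filter, Finset.mem_erase, Finset.mem_univ, true_and, and_true]
    constructor
    · exact fun h => h.2
    · intro h
      refine ⟨?_, h⟩
      rintro rfl
      exact hne y hy (by rw [← h, zero_pow ht.ne'])
  have hsum' : Fintype.card F - 1 = ∑ y ∈ K, ({x ∈ Finset.univ | x ^ t = y} : Finset F).card := by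
    rw [← herase, hsum]
    exact Finset.sum_congr rfl (fun y hy => by rw [hfeq y hy])
  have hle : ∀ y ∈ K, ({x ∈ Finset.univ | x ^ t = y} : Finset F).card ≤ t :=
    fun y _ => aux_card_pow_eq_le ht y
  have hsum_le : ∑ y ∈ K, ({x ∈ Finset.univ | x ^ t = y} : Finset F).card ≤ ∑ y ∈ K, t :=
    Finset.sum_le_sum hle
  have htot : ∑ y ∈ K, t ≤ d * t := by
    rw [Finset.sum_const, smul_eq_mul]
    exact Nat.mul_le_mul_right t hKcard
  have hall : ∑ y ∈ K, ({x ∈ Finset.univ | x ^ t = y} : Finset F).card = ∑ y ∈ K, t := by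
    omega
  have := (Finset.sum_eq_sum_iff_of_le hle).mp hall
  exact this b (by simp [hK, hb])

/-- Transfer of squareness along an embedding of finite fields of odd characteristic,
when the index `t` of the multiplicative groups is odd. -/
lemma aux_isSquare_transfer {E F : Type*} [Field E] [Fintype E] [Field F] [Fintype F]
    (φ : E →+* F) {t : ℕ} (htodd : Odd t)
    (hdiv : Fintype.card F / 2 = t * (Fintype.card E / 2))
    (hE2 : ringChar E ≠ 2) (hF2 : ringChar F ≠ 2)
    {x : E} (hx : x ≠ 0) : IsSquare (φ x) ↔ IsSquare x := by
  have hφx : φ x ≠ 0 := fun h => hx (φ.injective (by rw [h, map_zero]))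
  have key : (φ x) ^ (Fintype.card F / 2) = φ (x ^ (Fintype.card E / 2)) ^ t := by
    rw [hdiv, mul_comm, pow_mul, map_pow]
  rcases FiniteField.pow_dichotomy hE2 hx with h | h
  · rw [FiniteField.isSquare_iff hF2 hφx, FiniteField.isSquare_iff hE2 hx, h, key, h,
      map_one, one_pow]
    simp
  · have hneg : (φ x) ^ (Fintype.card F / 2) = -1 := by
      rw [key, h, map_neg, map_one, htodd.neg_one_pow]
    have hne1 : (-1 : F) ≠ 1 := Ring.neg_one_ne_one_of_char_ne_two hF2
    have hne1E : (-1 : E) ≠ 1 := Ring.neg_one_ne_one_of_char_ne_two hE2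
    rw [FiniteField.isSquare_iff hF2 hφx, FiniteField.isSquare_iff hE2 hx, h, hneg]
    simp [hne1, hne1E]

lemma aux_deltaS_map {E F : Type*} [Field E] [DecidableEq E] [Field F] [DecidableEq F]
    (φ : E →+* F) (S : Finset E) (a : E) :
    deltaS (S.image φ) (φ a) = φ (deltaS S a) := by
  unfold deltaS
  rw [← Finset.image_erase φ.injective, Finset.prod_image
    (fun x _ y _ h => φ.injective h), map_prod]
  simp [map_sub]

lemma aux_deltaS_translate {E : Type*} [Field E] [DecidableEq E] (S : Finset E) (c a : E) :
    deltaS (S.image (fun x => x - c)) (a - c) = deltaS S a := by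
  unfold deltaS
  have hinj : Function.Injective (fun x : E => x - c) := sub_left_injective
  rw [← Finset.image_erase hinj, Finset.prod_image (fun x _ y _ h => hinj h)]
  apply Finset.prod_congr rfl
  intro b _
  ring

lemma aux_deltaS_ne_zero {F : Type*} [Field F] [DecidableEq F] (S : Finset F) (a : F) :
    deltaS S a ≠ 0 := by
  unfold deltaS
  rw [Finset.prod_ne_zero_iff]
  intro b hb
  exact sub_ne_zero_of_ne (Ne.symm (Finset.mem_erase.mp hb).1)

open Polynomial in
/-- Main lifting lemma: a subset `S` of the small field `E` of cardinality `p^m` lifts to a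
subset `S'` of the big field `F` of cardinality `(p^m)^s` (s odd) of size `|S| * t`
(where `t = 1 + r + ⋯ + r^{s-1}`), such that quadratic characters of the delta values
correspond. -/
lemma aux_lift_main (p m s : ℕ) (hp : p.Prime) (hodd : p ≠ 2) (hm : 0 < m) (hso : Odd s)
    (F E : Type*) [Field F] [Fintype F] [DecidableEq F] [Field E] [Fintype E] [DecidableEq E]
    (hF : Fintype.card F = (p ^ m) ^ s) (hE : Fintype.card E = p ^ m)
    (S : Finset E) (hS : S.card < p ^ m) :
    ∃ S' : Finset F, S'.card = S.card * (∑ i ∈ Finset.range s, (p ^ m) ^ i) ∧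
      ∀ α ∈ S', ∃ a ∈ S,
        (IsSquare (deltaS S' α) ↔ IsSquare (deltaS S a)) ∧
        (IsSquare (-(deltaS S' α)) ↔ IsSquare (-(deltaS S a))) := by
  classical
  set r : ℕ := p ^ m with hrdef
  set t : ℕ := ∑ i ∈ Finset.range s, r ^ i with htdef
  have hp2 : 2 ≤ p := hp.two_le
  have hr2 : 2 ≤ r := le_trans hp2 (Nat.le_self_pow hm.ne' p)
  have hoddr : Odd r := (hp.odd_of_ne_two hodd).pow
  have hoddt : Odd t := aux_odd_geom hoddr hso
  have ht0 : 0 < t := hoddt.pos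
  have hgeom : (r - 1) * t = r ^ s - 1 := aux_nat_geom r s (by omega)
  have hq1 : Fintype.card F - 1 = (r - 1) * t := by rw [hF, hgeom]
  haveI hfact : Fact p.Prime := ⟨hp⟩
  haveI hcharE : CharP E p := aux_charP_of_card hp hE
  haveI hcharF : CharP F p := aux_charP_of_card hp (by rw [hF, ← pow_mul])
  have hringE : ringChar E = p := ringChar.eq E p
  have hringF : ringChar F = p := ringChar.eq F p
  have hE2 : ringChar E ≠ 2 := by rw [hringE]; exact hodd
  have hF2 : ringChar F ≠ 2 := by rw [hringF]; exact hodd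
  -- construct the embedding φ : E →+* F
  letI : Algebra (ZMod p) E := ZMod.algebra E p
  letI : Algebra (ZMod p) F := ZMod.algebra F p
  have e : E ≃ₐ[ZMod p] GaloisField p m := GaloisField.algEquivGaloisFieldOfFintype p m hE
  have hdvd : (X ^ p ^ m - X : (ZMod p)[X]) ∣ (X ^ Fintype.card F - X) := by
    have hr' : r - 1 + 1 = r := by omega
    have hq' : Fintype.card F - 1 + 1 = Fintype.card F := by
      have : 0 < Fintype.card F := Fintype.card_pos
      omega
    have h1 : (X ^ r - X : (ZMod p)[X]) = X * (X ^ (r - 1) - 1) := by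
      rw [mul_sub, mul_one, ← pow_succ', hr']
    have h2 : (X ^ Fintype.card F - X : (ZMod p)[X])
        = X * (X ^ (Fintype.card F - 1) - 1) := by
      rw [mul_sub, mul_one, ← pow_succ', hq']
    have h3 : (X ^ (r - 1) - 1 : (ZMod p)[X]) ∣ (X ^ (Fintype.card F - 1) - 1) := by
      have hpow : (X : (ZMod p)[X]) ^ (Fintype.card F - 1) = (X ^ (r - 1)) ^ t := by
        rw [← pow_mul, hq1]
      rw [hpow]
      simpa using sub_dvd_pow_sub_pow (X ^ (r - 1) : (ZMod p)[X]) 1 t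
    calc (X ^ p ^ m - X : (ZMod p)[X]) = X * (X ^ (r - 1) - 1) := h1
      _ ∣ X * (X ^ (Fintype.card F - 1) - 1) := mul_dvd_mul_left _ h3
      _ = X ^ Fintype.card F - X := h2.symm
  have hne : (X ^ Fintype.card F - X : (ZMod p)[X]) ≠ 0 :=
    FiniteField.X_pow_card_sub_X_ne_zero _ Fintype.one_lt_card
  have hsplits : Splits ((X ^ p ^ m - X : (ZMod p)[X]).map (algebraMap (ZMod p) F)) :=
    (FiniteField.splits_X_pow_card_sub_X p).of_dvd (Polynomial.map_ne_zero hne) (Polynomial.map_dvd _ hdvd)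
  letI := Fintype.ofFinite (GaloisField p m)
  haveI : IsSplittingField (ZMod p) (GaloisField p m) (X ^ p ^ m - X) :=
    FiniteField.isSplittingField_of_card_eq (K := GaloisField p m) (p := p) (n := m)
      (by rw [Fintype.card_eq_nat_card]; exact GaloisField.card p m hm.ne')
  let ψ : GaloisField p m →ₐ[ZMod p] F :=
    IsSplittingField.lift (GaloisField p m) (X ^ p ^ m - X : (ZMod p)[X]) hsplits
  let φ : E →+* F := (ψ.comp e.toAlgHom).toRingHom
  -- card / 2 relation
  have hdiv : Fintype.card F / 2 = t * (Fintype.card E / 2) := by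
    obtain ⟨u, hu⟩ := hoddr
    have h2 : Fintype.card F - 1 = 2 * (u * t) := by
      rw [hq1, show r - 1 = 2 * u by omega, mul_assoc]
    have h3 : 0 < Fintype.card F := Fintype.card_pos
    have h4 : Fintype.card F = 2 * (u * t) + 1 := by omega
    rw [h4, hE, hu, Nat.mul_add_div two_pos, Nat.mul_add_div two_pos]
    have h5 : (1 : ℕ) / 2 = 0 := rfl
    rw [h5, add_zero, add_zero, mul_comm]
  -- (t : F) = 1
  have htF : ((t : ℕ) : F) = 1 := by
    rw [htdef, hrdef]
    push_cast
    have hp0 : ((p : ℕ) : F) = 0 := CharP.cast_eq_zero F p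
    rw [hp0, zero_pow hm.ne']
    rw [Finset.sum_eq_single 0 (fun i _ hi => zero_pow hi)
      (fun h => absurd (Finset.mem_range.mpr hso.pos) h)]
    simp
  -- translate S away from 0
  have hSne : ∃ d0 : E, d0 ∉ S := by
    by_contra h
    push_neg at h
    have : S = Finset.univ := Finset.eq_univ_iff_forall.mpr h
    rw [this, Finset.card_univ, hE] at hS
    exact lt_irrefl _ hS
  obtain ⟨d0, hd0⟩ := hSne
  set T : Finset E := S.image (fun x => x - d0) with hT
  have hTcard : T.card = S.card := Finset.card_image_of_injective _ sub_left_injective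
  have hT0 : (0 : E) ∉ T := by
    intro h
    obtain ⟨a, ha, hae⟩ := Finset.mem_image.mp h
    exact hd0 ((sub_eq_zero.mp hae) ▸ ha)
  set S0 : Finset F := T.image φ with hS0
  have hS0card : S0.card = S.card := by
    rw [hS0, Finset.card_image_of_injective _ φ.injective, hTcard]
  have hS0_ne0 : ∀ b ∈ S0, b ≠ 0 := by
    intro b hb hb0
    obtain ⟨x, hx, rfl⟩ := Finset.mem_image.mp hb
    have hx0 : x ≠ 0 := fun h => hT0 (h ▸ hx)
    exact hx0 (φ.injective (by rw [hb0, map_zero]))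
  have hS0_pow : ∀ b ∈ S0, b ^ (r - 1) = 1 := by
    intro b hb
    obtain ⟨x, hx, rfl⟩ := Finset.mem_image.mp hb
    have hx0 : x ≠ 0 := fun h => hT0 (h ▸ hx)
    rw [← map_pow, ← map_one φ]
    congr 1
    have hone := FiniteField.pow_card_sub_one_eq_one x hx0
    rwa [hE] at hone
  -- the lifted set
  set S' : Finset F := {x ∈ Finset.univ | x ^ t ∈ S0} with hS'
  have hfibcard : ∀ b ∈ S0, ({x ∈ Finset.univ | x ^ t = b} : Finset F).card = t := by
    intro b hb
    exact aux_fib_card ht0 (by omega) hq1 (hS0_pow b hb)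
  have hS'card : S'.card = S.card * t := by
    have hmaps : ∀ x ∈ S', x ^ t ∈ S0 := fun x hx => (Finset.mem_filter.mp hx).2
    rw [Finset.card_eq_sum_card_fiberwise hmaps]
    have heq : ∀ b ∈ S0, (S'.filter (fun x => x ^ t = b)).card = t := by
      intro b hb
      have hset : S'.filter (fun x => x ^ t = b)
          = ({x ∈ Finset.univ | x ^ t = b} : Finset F) := by
        ext x
        simp only [hS', Finset.filter_filter, Finset.mem_filter, Finset.mem_univ, true_and]
        constructor
        · rintro ⟨_, h⟩; exact h
        · intro h; exact ⟨h ▸ hb, h⟩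
      rw [hset]
      exact hfibcard b hb
    rw [Finset.sum_congr rfl heq, Finset.sum_const, smul_eq_mul, hS0card]
  refine ⟨S', hS'card, ?_⟩
  intro α hα
  have hαt : α ^ t ∈ S0 := (Finset.mem_filter.mp hα).2
  set a : F := α ^ t with hadef
  obtain ⟨x1, hx1T, hx1⟩ := Finset.mem_image.mp hαt
  obtain ⟨a1, ha1S, ha1⟩ := Finset.mem_image.mp hx1T
  have hα0 : α ≠ 0 := by
    intro h
    have ha0 : a = 0 := by rw [hadef, h, zero_pow ht0.ne']
    exact hS0_ne0 a hαt ha0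
  -- the product over the fiber of a, with α removed
  have hfib_a : ({x ∈ Finset.univ | x ^ t = a} : Finset F).card = t := hfibcard a hαt
  have hαfib : α ∈ ({x ∈ Finset.univ | x ^ t = a} : Finset F) := by
    simp [hadef]
  have hCa : (C α : F[X]) ^ t = C a := by rw [← C_pow, hadef]
  have hprod_fib : ∏ β ∈ ({x ∈ Finset.univ | x ^ t = a} : Finset F), (X - C β)
      = X ^ t - C a := aux_fib_prod_eq ht0 a hfib_a
  have hgeom' : ∏ β ∈ ({x ∈ Finset.univ | x ^ t = a} : Finset F).erase α, (X - C β)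
      = ∑ i ∈ Finset.range t, X ^ i * (C α : F[X]) ^ (t - 1 - i) := by
    apply mul_right_cancel₀ (X_sub_C_ne_zero α)
    rw [geom_sum₂_mul, hCa, ← hprod_fib,
      ← Finset.mul_prod_erase _ (fun β => (X : F[X]) - C β) hαfib]
    ring
  have hprod_erase : ∏ β ∈ ({x ∈ Finset.univ | x ^ t = a} : Finset F).erase α, (α - β)
      = α ^ (t - 1) := by
    have h1 := congrArg (Polynomial.eval α) hgeom'
    simp only [eval_prod, eval_sub, eval_X, eval_C, eval_finset_sum, eval_pow, eval_mul] at h1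
    rw [h1]
    have h2 : ∀ i ∈ Finset.range t, α ^ i * α ^ (t - 1 - i) = α ^ (t - 1) := by
      intro i hi
      rw [← pow_add]
      congr 1
      have := Finset.mem_range.mp hi
      omega
    rw [Finset.sum_congr rfl h2, Finset.sum_const, Finset.card_range, nsmul_eq_mul, htF, one_mul]
  have hprod_b : ∀ b ∈ S0.erase a,
      ∏ β ∈ ({x ∈ Finset.univ | x ^ t = b} : Finset F), (α - β) = a - b := by
    intro b hb
    have hbS0 := Finset.mem_of_mem_erase hb
    have h1 := congrArg (Polynomial.eval α) (aux_fib_prod_eq ht0 b (hfibcard b hbS0))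
    simp only [eval_prod, eval_sub, eval_X, eval_C, eval_pow] at h1
    rw [h1, hadef]
  -- split the erased set
  have hsplit : S'.erase α = (({x ∈ Finset.univ | x ^ t = a} : Finset F).erase α)
      ∪ ((S0.erase a).biUnion (fun b => ({x ∈ Finset.univ | x ^ t = b} : Finset F))) := by
    ext β
    simp only [hS', Finset.mem_erase, Finset.mem_union, Finset.mem_biUnion, Finset.mem_filter,
      Finset.mem_univ, true_and]
    constructor
    · rintro ⟨hβα, hβ⟩
      by_cases h : β ^ t = a
      · exact Or.inl ⟨hβα, h⟩
      · exact Or.inr ⟨β ^ t, ⟨h, hβ⟩, rfl⟩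
    · rintro (⟨h1, h2⟩ | ⟨b, ⟨hba, hbS0⟩, rfl⟩)
      · exact ⟨h1, by rw [h2]; exact hαt⟩
      · refine ⟨?_, hbS0⟩
        rintro rfl
        exact hba hadef.symm
  have hdisjoint : Disjoint (({x ∈ Finset.univ | x ^ t = a} : Finset F).erase α)
      ((S0.erase a).biUnion fun b => ({x ∈ Finset.univ | x ^ t = b} : Finset F)) := by
    rw [Finset.disjoint_left]
    intro β hβ1 hβ2
    obtain ⟨b, hb, hβb⟩ := Finset.mem_biUnion.mp hβ2
    have h1 : β ^ t = a := (Finset.mem_filter.mp (Finset.mem_of_mem_erase hβ1)).2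
    have h2 : β ^ t = b := (Finset.mem_filter.mp hβb).2
    exact (Finset.mem_erase.mp hb).1 (by rw [← h2, h1])
  have hpair : (↑(S0.erase a) : Set F).PairwiseDisjoint
      (fun b => ({x ∈ Finset.univ | x ^ t = b} : Finset F)) := by
    intro b1 _ b2 _ hne12
    simp only [Function.onFun]
    rw [Finset.disjoint_left]
    intro x hx1 hx2
    exact hne12 (((Finset.mem_filter.mp hx1).2.symm).trans (Finset.mem_filter.mp hx2).2)
  have hdelta : deltaS S' α = α ^ (t - 1) * deltaS S0 a := by
    unfold deltaS
    rw [hsplit, Finset.prod_union hdisjoint, Finset.prod_biUnion hpair, hprod_erase]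
    congr 1
    exact Finset.prod_congr rfl hprod_b
  have hdS0 : deltaS S0 a = φ (deltaS S a1) := by
    rw [hS0, ← hx1, aux_deltaS_map φ T x1]
    rw [← ha1, hT]
    exact congrArg φ (aux_deltaS_translate S d0 a1)
  have hαpow : α ^ (t - 1) = (α ^ ((t - 1) / 2)) ^ 2 := by
    rw [← pow_mul]
    congr 1
    obtain ⟨k, hk⟩ := hoddt
    omega
  have hu0 : α ^ ((t - 1) / 2) ≠ 0 := pow_ne_zero _ hα0
  refine ⟨a1, ha1S, ?_, ?_⟩
  · rw [hdelta, hdS0, hαpow, aux_isSquare_sq_mul hu0]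
    exact aux_isSquare_transfer φ hoddt hdiv hE2 hF2 (aux_deltaS_ne_zero S a1)
  · rw [hdelta, hdS0,
      show -(α ^ (t - 1) * φ (deltaS S a1)) = α ^ (t - 1) * φ (-(deltaS S a1)) by
        rw [map_neg]; ring,
      hαpow, aux_isSquare_sq_mul hu0]
    exact aux_isSquare_transfer φ hoddt hdiv hE2 hF2
      (neg_ne_zero.mpr (aux_deltaS_ne_zero S a1))

theorem stmt_18 (p m s : ℕ) (hp : p.Prime) (hodd : p ≠ 2) (hm : 0 < m) (hso : Odd s)
    (r : ℕ) (hr : r = p ^ m)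
    (F E : Type*) [Field F] [Fintype F] [DecidableEq F] [Field E] [Fintype E] [DecidableEq E]
    (hF : Fintype.card F = r ^ s) (hE : Fintype.card E = r)
    (l : ℕ) (hl1 : 1 ≤ l) (hl2 : l ≤ r - 1) :
    (Even l → SigmaG E l → SigmaG F (l * ((r ^ s - 1) / (r - 1)))) ∧
    (Odd l → SigmaEG E (l + 1) → SigmaEG F (l * ((r ^ s - 1) / (r - 1)) + 1)) := by
  subst hr
  have hp2 : 2 ≤ p := hp.two_le
  have hr2 : 2 ≤ p ^ m := le_trans hp2 (Nat.le_self_pow hm.ne' p)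
  have hoddr : Odd (p ^ m) := (hp.odd_of_ne_two hodd).pow
  have hoddt : Odd (∑ i ∈ Finset.range s, (p ^ m) ^ i) := aux_odd_geom hoddr hso
  have ht1 : 1 ≤ ∑ i ∈ Finset.range s, (p ^ m) ^ i := hoddt.pos
  have htval : ((p ^ m) ^ s - 1) / (p ^ m - 1) = ∑ i ∈ Finset.range s, (p ^ m) ^ i := by
    rw [← aux_nat_geom (p ^ m) s (by omega)]
    exact Nat.mul_div_cancel_left _ (by omega)
  constructor
  · rintro hleven ⟨-, -, S, hScard, hsq⟩
    have hSlt : S.card < p ^ m := by omega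
    obtain ⟨S', hS'card, hS'prop⟩ :=
      aux_lift_main p m s hp hodd hm hso F E hF hE S hSlt
    have hl2' : 2 ≤ l := by
      obtain ⟨k, hk⟩ := hleven
      omega
    refine ⟨?_, ?_, S', ?_, ?_⟩
    · rw [htval]; exact hleven.mul_right _
    · rw [htval]
      calc 2 = 2 * 1 := by ring
        _ ≤ l * ∑ i ∈ Finset.range s, (p ^ m) ^ i := Nat.mul_le_mul hl2' ht1
    · rw [hS'card, hScard, htval]
    · rcases hsq with hall | hall
      · left
        intro α hα
        obtain ⟨a, haS, hiff, -⟩ := hS'prop α hα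
        exact hiff.mpr (hall a haS)
      · right
        intro α hα hc
        obtain ⟨a, haS, hiff, -⟩ := hS'prop α hα
        exact hall a haS (hiff.mp hc)
  · rintro hlodd ⟨-, -, S, hScard, hsq⟩
    have hScard' : S.card = l := by omega
    have hSlt : S.card < p ^ m := by omega
    obtain ⟨S', hS'card, hS'prop⟩ :=
      aux_lift_main p m s hp hodd hm hso F E hF hE S hSlt
    refine ⟨?_, ?_, S', ?_, ?_⟩
    · rw [htval]
      exact (hlodd.mul hoddt).add_one
    · have := Nat.mul_le_mul hl1 ht1
      rw [htval]
      omega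
    · rw [hS'card, hScard', htval]
      exact (Nat.add_sub_cancel _ _).symm
    · intro α hα
      obtain ⟨a, haS, -, hiff⟩ := hS'prop α hα
      exact hiff.mpr (hsq a haS)
end

section
/- Let p be an odd prime and q = p^m with q ≡ 3 (mod 4), and let n be a positive integer with n ≡ 2 (mod 4). Then there is no self-dual linear code over F_q of length n; that is, no F_q-subspace C of F_q^n satisfies C = C^⊥. -/
open Finset

open Matrix in
private lemma detJ_aux {R : Type*} [CommRing R] (k : ℕ) :
    (Matrix.fromBlocks (0 : Matrix (Fin k) (Fin k) R) (1 : Matrix (Fin k) (Fin k) R)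
      (1 : Matrix (Fin k) (Fin k) R) (0 : Matrix (Fin k) (Fin k) R)).det = (-1 : R) ^ k := by
  have key : Matrix.fromBlocks (0 : Matrix (Fin k) (Fin k) R) 1 1 0
      = (Matrix.fromBlocks 1 0 0 (-1) : Matrix (Fin k ⊕ Fin k) (Fin k ⊕ Fin k) R) *
        ((Matrix.fromBlocks 1 1 0 1 : Matrix (Fin k ⊕ Fin k) (Fin k ⊕ Fin k) R) *
          (Matrix.fromBlocks 1 0 (-1) 1 : Matrix (Fin k ⊕ Fin k) (Fin k ⊕ Fin k) R) *
          (Matrix.fromBlocks 1 1 0 1 : Matrix (Fin k ⊕ Fin k) (Fin k ⊕ Fin k) R)) := by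
    rw [Matrix.fromBlocks_multiply, Matrix.fromBlocks_multiply, Matrix.fromBlocks_multiply]
    norm_num
  rw [key]
  simp [Matrix.det_mul, Matrix.det_fromBlocks_zero₂₁, Matrix.det_fromBlocks_zero₁₂,
    Matrix.det_neg]

open Matrix in
theorem stmt_19 (p m : ℕ) (hp : p.Prime) (hodd : p ≠ 2) (hm : 0 < m)
    (F : Type*) [Field F] [Fintype F] (hF : Fintype.card F = p ^ m)
    (hq3 : p ^ m % 4 = 3)
    (n : ℕ) (hn0 : 0 < n) (hn : n % 4 = 2) :
    ¬ ∃ C : Submodule F (Fin n → F),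
        (C : Set (Fin n → F)) = {v | ∀ c ∈ C, ∑ i, v i * c i = 0} := by
  classical
  rintro ⟨C, hC⟩
  -- the standard bilinear form
  set B : LinearMap.BilinForm F (Fin n → F) :=
    LinearMap.mk₂ F (fun v w => ∑ i, v i * w i)
      (fun x y z => by simp [add_mul, Finset.sum_add_distrib])
      (fun a x y => by simp only [Pi.smul_apply, smul_eq_mul, Finset.mul_sum]; exact Finset.sum_congr rfl fun i _ => by ring)
      (fun x y z => by simp [mul_add, Finset.sum_add_distrib])
      (fun a x y => by simp only [Pi.smul_apply, smul_eq_mul, Finset.mul_sum]; exact Finset.sum_congr rfl fun i _ => by ring) with hB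
  have hBapp : ∀ v w : Fin n → F, B v w = ∑ i, v i * w i := fun v w => rfl
  have hrefl : B.IsRefl := by
    intro x y h
    rw [hBapp] at h ⊢
    simpa [mul_comm] using h
  have hnd : B.Nondegenerate := by
    refine ⟨?_, ?_⟩
    · intro v hv
      funext j
      have := hv (Pi.single j 1)
      rw [hBapp] at this
      simpa [Pi.single_apply, mul_ite, Finset.sum_ite_eq'] using this
    · intro v hv
      funext j
      have := hv (Pi.single j 1)
      rw [hBapp] at this
      simpa [Pi.single_apply, ite_mul, Finset.sum_ite_eq'] using this
  -- C equals its orthogonal complement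
  have hCC : LinearMap.BilinForm.orthogonal B C = C := by
    ext v
    have hv : v ∈ C ↔ ∀ c ∈ C, ∑ i, v i * c i = 0 := Set.ext_iff.mp hC v
    rw [hv]
    constructor
    · intro h c hc
      have := h c hc
      rw [hBapp] at this
      simpa [mul_comm] using this
    · intro h c hc
      rw [hBapp]
      simpa [mul_comm] using h c hc
  -- dimensions
  set k := Module.finrank F C with hk
  have hdim : Module.finrank F (Fin n → F) = n := by simp
  have hsum : k + k = n := by
    have h1 := LinearMap.BilinForm.finrank_add_finrank_orthogonal hrefl C
    rw [LinearMap.BilinForm.orthogonal_top_eq_bot hnd, inf_bot_eq, finrank_bot, add_zero, hCC, hdim] at h1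
    omega
  have hkodd : k % 2 = 1 := by omega
  -- bases
  obtain ⟨C', hcompl⟩ := Submodule.exists_isCompl C
  have hk' : Module.finrank F C' = k := by
    have := Submodule.finrank_add_eq_of_isCompl hcompl
    rw [hdim] at this; omega
  let b : Module.Basis (Fin k) F C := Module.finBasisOfFinrankEq F C rfl
  let b' : Module.Basis (Fin k) F C' := Module.finBasisOfFinrankEq F C' hk'
  let e : Module.Basis (Fin k ⊕ Fin k) F (Fin n → F) :=
    (b.prod b').map (Submodule.prodEquivOfIsCompl C C' hcompl)
  have heL : ∀ i, e (Sum.inl i) ∈ C := by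
    intro i
    simp only [e, Module.Basis.map_apply, Module.Basis.prod_apply]
    simp [Submodule.coe_prodEquivOfIsCompl']
  -- Gram matrix
  set G : Matrix (Fin k ⊕ Fin k) (Fin k ⊕ Fin k) F := Matrix.of fun a c => ∑ t, e a t * e c t with hGdef
  have hG0 : ∀ i j, G (Sum.inl i) (Sum.inl j) = 0 := by
    intro i j
    have h1 : (e (Sum.inl i) : Fin n → F) ∈ {v : Fin n → F | ∀ c ∈ C, ∑ t, v t * c t = 0} := by
      rw [← hC]; exact SetLike.mem_coe.mpr (heL i)
    exact h1 (e (Sum.inl j)) (heL j)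
  have hGsymm : ∀ a c, G a c = G c a := by
    intro a c; simp only [hGdef, Matrix.of_apply]; exact Finset.sum_congr rfl fun t _ => mul_comm _ _
  -- the change of basis matrix
  have hkk : k + k = n := hsum
  let eqv : Fin k ⊕ Fin k ≃ Fin n := finSumFinEquiv.trans (finCongr hkk)
  set Q : Matrix (Fin k ⊕ Fin k) (Fin k ⊕ Fin k) F := Matrix.of fun a s => e a (eqv s) with hQdef
  have hGQ : G = Q * Qᵀ := by
    ext a c
    simp only [hGdef, hQdef, Matrix.mul_apply, Matrix.transpose_apply, Matrix.of_apply]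
    exact (Fintype.sum_equiv eqv _ _ fun s => rfl).symm
  -- Q has nonzero determinant
  set T : Matrix (Fin n) (Fin k ⊕ Fin k) F := (Pi.basisFun F (Fin n)).toMatrix ⇑e with hTdef
  have hQT : Q = (T.submatrix ⇑eqv id)ᵀ := by
    ext a s
    simp [hQdef, hTdef, Module.Basis.toMatrix_apply]
  set U : Matrix (Fin k ⊕ Fin k) (Fin n) F := e.toMatrix ⇑(Pi.basisFun F (Fin n)) with hUdef
  have hUT : U * T = 1 := Module.Basis.toMatrix_mul_toMatrix_flip e (Pi.basisFun F (Fin n))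
  have hone : (U.submatrix id ⇑eqv) * (T.submatrix ⇑eqv id) = 1 := by
    rw [Matrix.submatrix_mul_equiv U T id eqv id, hUT]
    rfl
  have hdetQ : Q.det ≠ 0 := by
    intro h
    have := congrArg Matrix.det hone
    rw [Matrix.det_mul, Matrix.det_one] at this
    rw [hQT, Matrix.det_transpose] at h
    rw [h, mul_zero] at this
    exact zero_ne_one this
  -- block structure
  set M : Matrix (Fin k) (Fin k) F := Matrix.of fun i j => G (Sum.inl i) (Sum.inr j) with hMdef
  set D : Matrix (Fin k) (Fin k) F := Matrix.of fun i j => G (Sum.inr i) (Sum.inr j) with hDdef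
  have hGb : G = Matrix.fromBlocks 0 M Mᵀ D := by
    ext a c
    cases a with
    | inl i => cases c with
      | inl j => simpa using hG0 i j
      | inr j => rfl
    | inr i => cases c with
      | inl j => simpa [hMdef, Matrix.transpose_apply] using (hGsymm (Sum.inr i) (Sum.inl j))
      | inr j => rfl
  -- determinant computation
  have hJG : (Matrix.fromBlocks (0 : Matrix (Fin k) (Fin k) F) 1 1 0) * G
      = Matrix.fromBlocks Mᵀ D 0 M := by
    rw [hGb, Matrix.fromBlocks_multiply]
    simp
  have hdet1 : (-1 : F) ^ k * G.det = M.det * M.det := by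
    have := congrArg Matrix.det hJG
    rw [Matrix.det_mul, detJ_aux, Matrix.det_fromBlocks_zero₂₁, Matrix.det_transpose] at this
    exact this
  have hdet2 : G.det = Q.det * Q.det := by
    rw [hGQ, Matrix.det_mul, Matrix.det_transpose]
  have hneg1 : (-1 : F) ^ k = -1 := Odd.neg_one_pow ⟨k / 2, by omega⟩
  -- -1 is a square: contradiction
  have hsq : IsSquare (-1 : F) := by
    refine ⟨M.det / Q.det, ?_⟩
    rw [div_mul_div_comm]
    rw [← hdet1, hdet2, hneg1]
    field_simp
  rw [FiniteField.isSquare_neg_one_iff] at hsq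
  rw [hF] at hsq
  exact hsq hq3
end
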